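/- arXiv:1309.1429 — 3 statements merged into one kernel-verified Lean document; each statement's English description precedes it below -/
import Mathlib

section
/- Let a finite group G act on a weighted set S where each weight is a product of powers of variables, and let g ∈ G. Then the sum of the weights of the multisets of elements of S fixed by g equals exp( Σ_{m=1}^∞ p_m[fix(g^m)] / m ), where fix(h) is the sum of weights of elements of S fixed by h, and p_m[u] denotes the formal power series u with every variable replaced by its m-th power. -/
open PowerSeries MulAction

namespace FMAux

set_option linter.unusedSectionVars false
set_option maxHeartbeats 1000000

variable {G S : Type*} [Group G] [Fintype G] [MulAction G S] [DecidableEq S]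

section OrbitLemmas

set_option linter.unusedSectionVars false



/-- The orbit of `s` under powers of `g`, as a multiset. -/
noncomputable def orb (g : G) (s : S) : Multiset S :=
  (Finset.range (period g s)).val.map (fun i => g ^ i • s)

variable (g : G) (s : S)

lemma period_pos : 0 < period g s :=
  MulAction.period_pos_of_orderOf_pos (orderOf_pos g) s

lemma card_orb : Multiset.card (orb g s) = period g s := by
  simp [orb]

lemma pow_smul_inj {i j : ℕ} (hi : i < period g s) (hj : j < period g s)
    (h : g ^ i • s = g ^ j • s) : i = j := by
  wlog hij : i ≤ j generalizing i j
  · exact (this hj hi h.symm (le_of_not_ge hij)).symm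
  by_contra hne
  have h1 : g ^ (j - i) • s = s := by
    have h1' : g ^ i • (g ^ (j - i) • s) = g ^ i • s := by
      rw [smul_smul, ← pow_add, Nat.add_sub_cancel' hij, h]
    exact MulAction.injective (g ^ i) h1'
  have h2 : period g s ∣ (j - i) := (pow_smul_eq_iff_period_dvd).mp h1
  have h3 : 0 < j - i := Nat.sub_pos_of_lt (lt_of_le_of_ne hij hne)
  have := Nat.le_of_dvd h3 h2
  omega

lemma nodup_orb : (orb g s).Nodup := by
  refine Multiset.Nodup.map_on ?_ (Finset.range (period g s)).nodup
  intro i hi j hj h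
  exact pow_smul_inj g s (by simpa using hi) (by simpa using hj) h

lemma mem_orb {t : S} : t ∈ orb g s ↔ ∃ i, i < period g s ∧ g ^ i • s = t := by
  simp [orb]

lemma pow_smul_mem_orb (n : ℕ) : g ^ n • s ∈ orb g s := by
  rw [mem_orb]
  refine ⟨n % period g s, Nat.mod_lt _ (period_pos g s), ?_⟩
  conv_rhs => rw [← Nat.mod_add_div n (period g s)]
  rw [pow_add, mul_smul,
    show g ^ (period g s * (n / period g s)) • s = s from
      pow_smul_eq_iff_period_dvd.mpr ⟨_, rfl⟩]

lemma self_mem_orb : s ∈ orb g s := by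
  simpa using pow_smul_mem_orb g s 0

lemma map_smul_orb : (orb g s).map (fun t => g • t) = orb g s := by
  rw [Multiset.Nodup.ext (Multiset.Nodup.map (MulAction.injective g) (nodup_orb g s))
    (nodup_orb g s)]
  intro t
  simp only [Multiset.mem_map]
  constructor
  · rintro ⟨a, ha, rfl⟩
    rw [mem_orb] at ha
    obtain ⟨i, hi, rfl⟩ := ha
    rw [← mul_smul, ← pow_succ']
    exact pow_smul_mem_orb g s (i + 1)
  · intro ht
    rw [mem_orb] at ht
    obtain ⟨i, hi, rfl⟩ := ht
    rcases Nat.eq_zero_or_pos i with rfl | hpos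
    · refine ⟨g ^ (period g s - 1) • s, pow_smul_mem_orb g s _, ?_⟩
      rw [← mul_smul, ← pow_succ']
      rw [show period g s - 1 + 1 = period g s by
        have := period_pos g s; omega]
      simpa using MulAction.pow_period_smul g s
    · refine ⟨g ^ (i - 1) • s, pow_smul_mem_orb g s _, ?_⟩
      rw [← mul_smul, ← pow_succ']
      congr 2
      omega

lemma weight_orb (w : S → ℕ) (hw : ∀ (h : G) (t : S), w (h • t) = w t) :
    ((orb g s).map w).sum = period g s * w s := by
  have h : (orb g s).map w = Multiset.replicate (period g s) (w s) := by
    rw [Multiset.eq_replicate]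
    constructor
    · rw [Multiset.card_map, card_orb]
    · intro b hb
      obtain ⟨t, ht, rfl⟩ := Multiset.mem_map.mp hb
      obtain ⟨i, _, rfl⟩ := (mem_orb g s).mp ht
      exact hw (g ^ i) s
  rw [h, Multiset.sum_replicate, smul_eq_mul]

lemma count_smul_eq {M : Multiset S} (hM : M.map (fun t => g • t) = M) (t : S) :
    M.count (g • t) = M.count t := by
  conv_lhs => rw [← hM]
  exact Multiset.count_map_eq_count' _ M (MulAction.injective g) t

lemma count_pow_smul_eq {M : Multiset S} (hM : M.map (fun t => g • t) = M) (n : ℕ) :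
    M.count (g ^ n • s) = M.count s := by
  induction n with
  | zero => simp
  | succ n ih =>
    rw [pow_succ', mul_smul, count_smul_eq g hM, ih]

lemma le_count_iff {M : Multiset S} (hM : M.map (fun t => g • t) = M) (k : ℕ) :
    k ≤ M.count s ↔ k • orb g s ≤ M := by
  constructor
  · intro h
    rw [Multiset.le_iff_count]
    intro t
    rw [Multiset.count_nsmul]
    by_cases ht : t ∈ orb g s
    · rw [Multiset.count_eq_one_of_mem (nodup_orb g s) ht, mul_one]
      obtain ⟨i, _, rfl⟩ := (mem_orb g s).mp ht
      rw [count_pow_smul_eq g s hM]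
      exact h
    · rw [Multiset.count_eq_zero_of_notMem ht, mul_zero]
      exact Nat.zero_le _
  · intro h
    calc k = (k • orb g s).count s := by
            rw [Multiset.count_nsmul,
              Multiset.count_eq_one_of_mem (nodup_orb g s) (self_mem_orb g s), mul_one]
      _ ≤ M.count s := Multiset.le_iff_count.mp h s




end OrbitLemmas

lemma finite_wle (w : S → ℕ) (hfin : ∀ n : ℕ, {s : S | w s = n}.Finite) (N : ℕ) :
    {s : S | w s ≤ N}.Finite := by
  have h : {s : S | w s ≤ N} = ⋃ n ∈ Set.Iic N, {s : S | w s = n} := by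
    ext s; simp [Set.mem_iUnion]
  rw [h]
  exact Set.Finite.biUnion (Set.finite_Iic N) (fun n _ => hfin n)

lemma finite_card_le {β : Type*} [Fintype β] (N : ℕ) :
    {m : Multiset β | Multiset.card m ≤ N}.Finite := by
  have h : {m : Multiset β | Multiset.card m ≤ N} =
      ⋃ n ∈ Set.Iic N, Set.range ((↑) : Sym β n → Multiset β) := by
    ext m
    simp only [Set.mem_setOf_eq, Set.mem_iUnion, Set.mem_range, Set.mem_Iic]
    constructor
    · intro hm
      exact ⟨Multiset.card m, hm, ⟨m, rfl⟩, rfl⟩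
    · rintro ⟨n, hn, ⟨m', hm'⟩, rfl⟩
      subst hm'
      exact hn
  rw [h]
  exact Set.Finite.biUnion (Set.finite_Iic N) (fun n _ => Set.finite_range _)

lemma card_le_weight (w : S → ℕ) (hw1 : ∀ s : S, 1 ≤ w s) (M : Multiset S) :
    Multiset.card M ≤ (M.map w).sum := by
  calc Multiset.card M = Multiset.card (M.map w) := (Multiset.card_map w M).symm
    _ ≤ (M.map w).sum := by
        have h := Multiset.card_nsmul_le_sum (s := M.map w) (a := 1) ?_
        · simpa using h
        · intro x hx
          obtain ⟨t, _, rfl⟩ := Multiset.mem_map.mp hx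
          exact hw1 t

lemma mem_weight_le (w : S → ℕ) {M : Multiset S} {N : ℕ} (hM : (M.map w).sum = N)
    {s : S} (hs : s ∈ M) : w s ≤ N := by
  rw [← hM]
  exact Multiset.single_le_sum (fun x _ => Nat.zero_le x) _
    (Multiset.mem_map_of_mem w hs)

lemma finite_weight (w : S → ℕ) (hw1 : ∀ s : S, 1 ≤ w s)
    (hfin : ∀ n : ℕ, {s : S | w s = n}.Finite) (N : ℕ) :
    {M : Multiset S | (M.map w).sum = N}.Finite := by
  have hT : {s : S | w s ≤ N}.Finite := finite_wle w hfin N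
  haveI : Fintype {s : S | w s ≤ N} := hT.fintype
  have himg : {M : Multiset S | (M.map w).sum = N} ⊆
      (fun m : Multiset {s : S | w s ≤ N} => m.map Subtype.val) ''
        {m | Multiset.card m ≤ N} := by
    intro M hM
    simp only [Set.mem_setOf_eq] at hM
    refine ⟨M.attach.map (fun x => ⟨x.1, mem_weight_le w hM x.2⟩), ?_, ?_⟩
    · simp only [Set.mem_setOf_eq, Multiset.card_map, Multiset.card_attach]
      rw [← hM]
      exact card_le_weight w hw1 M
    · show Multiset.map _ (Multiset.map _ M.attach) = M
      rw [Multiset.map_map]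
      exact Multiset.attach_map_val M
  exact Set.Finite.subset (Set.Finite.image _ (finite_card_le N)) himg

lemma natCard_eq {α : Type*} (p : α → Prop) (h : {x : α | p x}.Finite) :
    Nat.card {x : α // p x} = h.toFinset.card := by
  rw [show Nat.card {x : α // p x} = Nat.card {x : α | p x} from rfl,
    Nat.card_coe_set_eq, Set.ncard_eq_toFinset_card _ h]





section Core
variable (w : S → ℕ) (g : G)

noncomputable def aN (N : ℕ) : ℕ :=
  Nat.card {M : Multiset S // (M.map fun s => g • s) = M ∧ (M.map w).sum = N}

variable (hw1 : ∀ s : S, 1 ≤ w s) (hfin : ∀ n : ℕ, {s : S | w s = n}.Finite)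

include hw1 hfin

lemma finite_fixed (N : ℕ) :
    {M : Multiset S | (M.map fun s => g • s) = M ∧ (M.map w).sum = N}.Finite :=
  (finite_weight w hw1 hfin N).subset (fun _ hM => hM.2)

lemma aN_eq_card (N : ℕ) : aN w g N = (finite_fixed w g hw1 hfin N).toFinset.card :=
  natCard_eq _ _

lemma aN_zero : aN w g 0 = 1 := by
  rw [aN_eq_card w g hw1 hfin]
  have h : (finite_fixed w g hw1 hfin 0).toFinset = {0} := by
    ext M
    simp only [Set.Finite.mem_toFinset, Set.mem_setOf_eq, Finset.mem_singleton]
    constructor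
    · rintro ⟨-, hsum⟩
      by_contra hne
      obtain ⟨s, hs⟩ := Multiset.exists_mem_of_ne_zero hne
      have := mem_weight_le w hsum hs
      have := hw1 s
      omega
    · rintro rfl
      simp
  rw [h, Finset.card_singleton]

/-- Step 5: counting fixed multisets containing `k` copies of the orbit of `s`. -/
lemma card_filter_count (hw : ∀ (h : G) (s : S), w (h • s) = w s) (N k : ℕ) (hk : 1 ≤ k) (s : S) :
    ((finite_fixed w g hw1 hfin N).toFinset.filter (fun M => k ≤ M.count s)).card
      = if k * (period g s * w s) ≤ N then aN w g (N - k * (period g s * w s)) else 0 := by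
  have hworb : ((k • orb g s).map w).sum = k * (period g s * w s) := by
    rw [Multiset.map_nsmul, Multiset.sum_nsmul, weight_orb g s w hw, smul_eq_mul]
  have hmaporb : (k • orb g s).map (fun t => g • t) = k • orb g s := by
    rw [Multiset.map_nsmul, map_smul_orb]
  split_ifs with hle
  · rw [aN_eq_card w g hw1 hfin]
    refine Finset.card_nbij' (fun M => M - k • orb g s) (fun M' => M' + k • orb g s)
      ?_ ?_ ?_ ?_
    · intro M hM
      simp only [Finset.mem_coe] at hM ⊢
      simp only [Finset.mem_filter, Set.Finite.mem_toFinset, Set.mem_setOf_eq] at hM ⊢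
      obtain ⟨⟨hfix, hsum⟩, hcount⟩ := hM
      have hsub : k • orb g s ≤ M := (le_count_iff g s hfix k).mp hcount
      have hdecomp : M - k • orb g s + k • orb g s = M := tsub_add_cancel_of_le hsub
      constructor
      · -- fixedness of the difference
        have h1 : ((M - k • orb g s).map (fun t => g • t)) + k • orb g s
            = (M - k • orb g s) + k • orb g s := by
          calc ((M - k • orb g s).map (fun t => g • t)) + k • orb g s
              = ((M - k • orb g s).map (fun t => g • t))
                  + (k • orb g s).map (fun t => g • t) := by rw [hmaporb]
            _ = ((M - k • orb g s) + k • orb g s).map (fun t => g • t) := by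
                  rw [Multiset.map_add]
            _ = M.map (fun t => g • t) := by rw [hdecomp]
            _ = M := hfix
            _ = (M - k • orb g s) + k • orb g s := hdecomp.symm
        exact add_right_cancel h1
      · have h2 : ((M - k • orb g s).map w).sum + k * (period g s * w s) = N := by
          rw [← hworb, ← Multiset.sum_add, ← Multiset.map_add, hdecomp, hsum]
        omega
    · intro M' hM'
      simp only [Finset.mem_coe] at hM' ⊢
      simp only [Finset.mem_filter, Set.Finite.mem_toFinset, Set.mem_setOf_eq] at hM' ⊢
      obtain ⟨hfix, hsum⟩ := hM'
      refine ⟨⟨?_, ?_⟩, ?_⟩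
      · rw [Multiset.map_add, hfix, hmaporb]
      · rw [Multiset.map_add, Multiset.sum_add, hsum, hworb]
        omega
      · rw [le_count_iff g s (by rw [Multiset.map_add, hfix, hmaporb]) k]
        exact le_add_self
    · intro M hM
      simp only [Finset.mem_coe] at hM
      simp only [Finset.mem_filter, Set.Finite.mem_toFinset, Set.mem_setOf_eq] at hM
      exact tsub_add_cancel_of_le ((le_count_iff g s hM.1.1 k).mp hM.2)
    · intro M' _
      show M' + k • orb g s - k • orb g s = M'
      simp
  · rw [Finset.card_eq_zero, Finset.filter_eq_empty_iff]
    intro M hM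
    simp only [Set.Finite.mem_toFinset, Set.mem_setOf_eq] at hM
    intro hcount
    have hsub : k • orb g s ≤ M := (le_count_iff g s hM.1 k).mp hcount
    have hdecomp : M - k • orb g s + k • orb g s = M := tsub_add_cancel_of_le hsub
    have : ((M - k • orb g s).map w).sum + k * (period g s * w s) = N := by
      rw [← hworb, ← Multiset.sum_add, ← Multiset.map_add, hdecomp, hM.2]
    omega


lemma keyA (N : ℕ) (hw : ∀ (h : G) (s : S), w (h • s) = w s) :
    N * aN w g N = ∑ s ∈ (finite_wle w hfin N).toFinset, w s *
      ∑ k ∈ Finset.Icc 1 N,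
        (if k * (period g s * w s) ≤ N then aN w g (N - k * (period g s * w s)) else 0) := by
  classical
  set T := (finite_wle w hfin N).toFinset with hT
  set F := (finite_fixed w g hw1 hfin N).toFinset with hF
  have hmem : ∀ M ∈ F, (M.map fun s => g • s) = M ∧ (M.map w).sum = N := by
    intro M hM
    rw [hF, Set.Finite.mem_toFinset] at hM
    exact hM
  have hcountle : ∀ M ∈ F, ∀ s : S, M.count s ≤ N := by
    intro M hM s
    calc M.count s ≤ Multiset.card M := Multiset.count_le_card s M
      _ ≤ (M.map w).sum := card_le_weight w hw1 M
      _ = N := (hmem M hM).2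
  calc N * aN w g N
      = ∑ _M ∈ F, N := by
        rw [Finset.sum_const, smul_eq_mul, aN_eq_card w g hw1 hfin, mul_comm, ← hF]
    _ = ∑ M ∈ F, (M.map w).sum := by
        refine Finset.sum_congr rfl (fun M hM => ?_)
        exact ((hmem M hM).2).symm
    _ = ∑ M ∈ F, ∑ s ∈ T, M.count s * w s := by
        refine Finset.sum_congr rfl (fun M hM => ?_)
        rw [Finset.sum_multiset_map_count]
        refine Finset.sum_subset ?_ ?_
        · intro s hs
          rw [hT, Set.Finite.mem_toFinset]
          exact mem_weight_le w (hmem M hM).2 (Multiset.mem_toFinset.mp hs)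
        · intro s _ hs
          rw [Multiset.count_eq_zero_of_notMem (fun h => hs (Multiset.mem_toFinset.mpr h))]
          simp
    _ = ∑ s ∈ T, ∑ M ∈ F, M.count s * w s := Finset.sum_comm
    _ = ∑ s ∈ T, w s *
          ∑ k ∈ Finset.Icc 1 N,
            (if k * (period g s * w s) ≤ N then aN w g (N - k * (period g s * w s)) else 0) := by
        refine Finset.sum_congr rfl (fun s _ => ?_)
        rw [← Finset.sum_mul, mul_comm]
        congr 1
        calc ∑ M ∈ F, M.count s
            = ∑ M ∈ F, ∑ k ∈ Finset.Icc 1 N, (if k ≤ M.count s then 1 else 0) := by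
              refine Finset.sum_congr rfl (fun M hM => ?_)
              rw [← Finset.card_filter]
              have h1 : (Finset.Icc 1 N).filter (fun k => k ≤ M.count s)
                  = Finset.Icc 1 (M.count s) := by
                ext k
                simp only [Finset.mem_filter, Finset.mem_Icc]
                have := hcountle M hM s
                omega
              rw [h1, Nat.card_Icc]
              omega
          _ = ∑ k ∈ Finset.Icc 1 N, ∑ M ∈ F, (if k ≤ M.count s then 1 else 0) :=
              Finset.sum_comm
          _ = ∑ k ∈ Finset.Icc 1 N,
                (if k * (period g s * w s) ≤ N
                  then aN w g (N - k * (period g s * w s)) else 0) := by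
              refine Finset.sum_congr rfl (fun k hk => ?_)
              rw [← Finset.card_filter]
              exact card_filter_count w g hw1 hfin hw N k (Finset.mem_Icc.mp hk).1 s


noncomputable def cN (m d : ℕ) : ℕ :=
  Nat.card {s : S // g ^ m • s = s ∧ w s = d}

omit hw1 in
lemma finite_cfix (m d : ℕ) : {s : S | g ^ m • s = s ∧ w s = d}.Finite :=
  (hfin d).subset (fun _ hs => hs.2)

omit hw1 in
lemma cN_eq_card (m d : ℕ) :
    cN w g m d = (finite_cfix w g hfin m d).toFinset.card :=
  natCard_eq _ _

omit hw1 in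
lemma cN_eq_filter (N m d : ℕ) (hd : d ≤ N) :
    cN w g m d = ((finite_wle w hfin N).toFinset.filter
      (fun s => g ^ m • s = s ∧ w s = d)).card := by
  classical
  rw [cN_eq_card w g hfin]
  congr 1
  ext s
  simp only [Set.Finite.mem_toFinset, Set.mem_setOf_eq, Finset.mem_filter]
  constructor
  · intro h
    exact ⟨h.2 ▸ hd, h⟩
  · exact fun h => h.2

lemma innerB (N j : ℕ) (hj1 : 1 ≤ j) (hjN : j ≤ N) :
    (∑ m ∈ Finset.Icc 1 j, if m ∣ j then (j / m) * cN w g m (j / m) else 0)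
      = ∑ s ∈ (finite_wle w hfin N).toFinset,
          (if period g s * w s ∣ j then w s else 0) := by
  classical
  set T := (finite_wle w hfin N).toFinset with hT
  have step1 : (∑ m ∈ Finset.Icc 1 j, if m ∣ j then (j / m) * cN w g m (j / m) else 0)
      = ∑ m ∈ Finset.Icc 1 j, ∑ s ∈ T,
          (if m ∣ j ∧ period g s ∣ m ∧ w s = j / m then j / m else 0) := by
    refine Finset.sum_congr rfl (fun m hm => ?_)
    by_cases hmj : m ∣ j
    · rw [if_pos hmj, cN_eq_filter w g hfin N m (j / m) ((Nat.div_le_self j m).trans hjN)]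
      rw [Finset.card_filter, Finset.mul_sum]
      refine Finset.sum_congr rfl (fun s hs => ?_)
      rw [mul_ite, mul_one, mul_zero]
      refine if_congr ⟨?_, ?_⟩ rfl rfl
      · rintro ⟨h1, h2⟩
        exact ⟨hmj, pow_smul_eq_iff_period_dvd.mp h1, h2⟩
      · rintro ⟨-, h1, h2⟩
        exact ⟨pow_smul_eq_iff_period_dvd.mpr h1, h2⟩
    · rw [if_neg hmj]
      symm
      refine Finset.sum_eq_zero (fun s _ => ?_)
      rw [if_neg (fun h => hmj h.1)]
  rw [step1, Finset.sum_comm]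
  refine Finset.sum_congr rfl (fun s _ => ?_)
  have hws : 1 ≤ w s := hw1 s
  have hj0 : j ≠ 0 := by omega
  by_cases hWs : period g s * w s ∣ j
  · rw [if_pos hWs]
    have hwsj : w s ∣ j := dvd_trans (dvd_mul_left (w s) (period g s)) hWs
    have hm0mem : j / w s ∈ Finset.Icc 1 j := by
      rw [Finset.mem_Icc]
      constructor
      · rw [Nat.one_le_div_iff (by omega)]
        exact Nat.le_of_dvd (by omega) hwsj
      · exact Nat.div_le_self j (w s)
    rw [Finset.sum_eq_single (j / w s)]
    · rw [if_pos]
      · exact Nat.div_div_self hwsj hj0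
      · refine ⟨Nat.div_dvd_of_dvd hwsj, ?_, (Nat.div_div_self hwsj hj0).symm⟩
        rw [Nat.dvd_div_iff_mul_dvd hwsj, mul_comm]
        exact hWs
    · intro m hm hne
      rw [if_neg]
      rintro ⟨h1, -, h3⟩
      apply hne
      have : m * w s = j := by rw [h3]; exact Nat.mul_div_cancel' h1
      rw [← this, Nat.mul_div_cancel _ (by omega)]
    · intro h
      exact absurd hm0mem h
  · rw [if_neg hWs]
    refine Finset.sum_eq_zero (fun m hm => ?_)
    rw [if_neg]
    rintro ⟨h1, h2, h3⟩
    apply hWs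
    have hj : m * w s = j := by rw [h3]; exact Nat.mul_div_cancel' h1
    rw [← hj]
    exact mul_dvd_mul h2 dvd_rfl

omit hw1 hfin in
lemma reindexB (N W : ℕ) (hW : 1 ≤ W) (f : ℕ → ℕ) :
    (∑ j ∈ Finset.Icc 1 N, if W ∣ j then f j else 0)
      = ∑ k ∈ Finset.Icc 1 N, (if k * W ≤ N then f (k * W) else 0) := by
  classical
  rw [← Finset.sum_filter, ← Finset.sum_filter]
  refine Finset.sum_nbij' (fun j => j / W) (fun k => k * W) ?_ ?_ ?_ ?_ ?_
  · intro j hj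
    simp only [Finset.mem_filter, Finset.mem_Icc] at hj ⊢
    obtain ⟨⟨hj1, hjN⟩, hdvd⟩ := hj
    have h1 : j / W * W = j := Nat.div_mul_cancel hdvd
    refine ⟨⟨?_, (Nat.div_le_self j W).trans hjN⟩, by omega⟩
    rw [Nat.one_le_div_iff (by omega)]
    exact Nat.le_of_dvd (by omega) hdvd
  · intro k hk
    simp only [Finset.mem_filter, Finset.mem_Icc] at hk ⊢
    obtain ⟨⟨hk1, -⟩, hkW⟩ := hk
    exact ⟨⟨by nlinarith, hkW⟩, dvd_mul_left W k⟩
  · intro j hj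
    simp only [Finset.mem_filter] at hj
    exact Nat.div_mul_cancel hj.2
  · intro k _
    exact Nat.mul_div_cancel _ (by omega)
  · intro j hj
    simp only [Finset.mem_filter] at hj
    rw [Nat.div_mul_cancel hj.2]

lemma keyB (N : ℕ) :
    ∑ j ∈ Finset.Icc 1 N,
        (∑ m ∈ Finset.Icc 1 j, if m ∣ j then (j / m) * cN w g m (j / m) else 0)
          * aN w g (N - j)
      = ∑ s ∈ (finite_wle w hfin N).toFinset, w s *
          ∑ k ∈ Finset.Icc 1 N,
            (if k * (period g s * w s) ≤ N
              then aN w g (N - k * (period g s * w s)) else 0) := by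
  classical
  set T := (finite_wle w hfin N).toFinset with hT
  have step1 : ∀ j ∈ Finset.Icc 1 N,
      (∑ m ∈ Finset.Icc 1 j, if m ∣ j then (j / m) * cN w g m (j / m) else 0)
          * aN w g (N - j)
        = ∑ s ∈ T, (if period g s * w s ∣ j then w s * aN w g (N - j) else 0) := by
    intro j hj
    rw [Finset.mem_Icc] at hj
    rw [innerB w g hw1 hfin N j hj.1 hj.2, Finset.sum_mul]
    refine Finset.sum_congr rfl (fun s _ => ?_)
    rw [ite_mul, zero_mul]
  rw [Finset.sum_congr rfl step1, Finset.sum_comm]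
  refine Finset.sum_congr rfl (fun s _ => ?_)
  have hW : 1 ≤ period g s * w s := by
    have h1 := period_pos g s
    have h2 := hw1 s
    nlinarith
  have hmov : ∀ j, (if period g s * w s ∣ j then w s * aN w g (N - j) else 0)
      = w s * (if period g s * w s ∣ j then aN w g (N - j) else 0) := by
    intro j
    rw [mul_ite, mul_zero]
  simp only [hmov]
  rw [← Finset.mul_sum, reindexB N (period g s * w s) hW (fun j => aN w g (N - j))]

lemma keyN (N : ℕ) (hw : ∀ (h : G) (s : S), w (h • s) = w s) :
    N * aN w g N
      = ∑ j ∈ Finset.Icc 1 N,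
          (∑ m ∈ Finset.Icc 1 j, if m ∣ j then (j / m) * cN w g m (j / m) else 0)
            * aN w g (N - j) :=
  (keyA w g hw1 hfin N hw).trans (keyB w g hw1 hfin N).symm


omit hw1 hfin in
lemma sum_shift {M : Type*} [AddCommMonoid M] (h : ℕ → M) (N : ℕ) :
    ∑ i ∈ Finset.range N, h (i + 1) = ∑ j ∈ Finset.Icc 1 N, h j := by
  rw [← Finset.Ico_add_one_right_eq_Icc, Finset.sum_Ico_eq_sum_range]
  simp [add_comm]

omit hw1 hfin in
lemma cast_b (j : ℕ) (hj : 1 ≤ j) :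
    (∑ m ∈ Finset.Icc 1 j,
        if m ∣ j then
          (m : ℚ)⁻¹ * (Nat.card {s : S // g ^ m • s = s ∧ w s = j / m} : ℚ)
        else 0) * (j : ℚ)
      = ((∑ m ∈ Finset.Icc 1 j,
          if m ∣ j then (j / m) * cN w g m (j / m) else 0 : ℕ) : ℚ) := by
  show (∑ m ∈ Finset.Icc 1 j,
        if m ∣ j then (m : ℚ)⁻¹ * (cN w g m (j / m) : ℚ) else 0) * (j : ℚ) = _
  rw [Finset.sum_mul, Nat.cast_sum]
  refine Finset.sum_congr rfl (fun m hm => ?_)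
  rw [Finset.mem_Icc] at hm
  by_cases hmj : m ∣ j
  · have hm0 : (m : ℚ) ≠ 0 := Nat.cast_ne_zero.mpr (by omega)
    rw [if_pos hmj, if_pos hmj, Nat.cast_mul, Nat.cast_div hmj hm0]
    field_simp
  · rw [if_neg hmj, if_neg hmj, zero_mul, Nat.cast_zero]


end Core

lemma coeff_derivativeFun {R : Type*} [CommSemiring R] (f : PowerSeries R) (n : ℕ) :
    PowerSeries.coeff n f.derivativeFun = PowerSeries.coeff (n + 1) f * (n + 1) := by
  rw [show f.derivativeFun = PowerSeries.derivative R f from rfl, PowerSeries.coeff_derivative]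

end FMAux

open PowerSeries

/-- **Fixed multisets lemma.** Let a finite group `G` act on a weighted set `S`
with monomial weights `x ^ w s` (with `w s ≥ 1` and finite weight-fibers, so that
all the generating functions are well-defined), and let `g ∈ G`.  Then the sum of
the weights of the multisets of elements of `S` fixed by `g` equals
`exp (Σ_{m ≥ 1} p_m[fix(g^m)] / m)`, where `fix(h)` is the generating function of
elements fixed by `h` and `p_m` replaces `x` by `x^m`.  The series
`f = Σ_{m ≥ 1} p_m[fix(g^m)]/m` is given coefficientwise (its coefficient at `x^j`
is `Σ_{m ∣ j, 1 ≤ m ≤ j} (1/m)·fix(g^m)_{j/m}`), and `exp f` is encoded as the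
unique series `E` with constant term `1` satisfying `E' = f' · E`; the conclusion
is that `E` agrees coefficientwise with the generating function of fixed
multisets. -/
theorem fixed_multisets_exp {G S : Type*} [Group G] [Fintype G] [MulAction G S]
    (w : S → ℕ) (hw : ∀ (h : G) (s : S), w (h • s) = w s)
    (hw1 : ∀ s : S, 1 ≤ w s) (hfin : ∀ n : ℕ, {s : S | w s = n}.Finite)
    (g : G) :
    ∀ E : PowerSeries ℚ, constantCoeff E = 1 →
      E.derivativeFun =
        ((PowerSeries.mk fun j : ℕ =>
            ∑ m ∈ Finset.Icc 1 j,
              if m ∣ j then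
                (m : ℚ)⁻¹ * (Nat.card {s : S // g ^ m • s = s ∧ w s = j / m} : ℚ)
              else 0 : PowerSeries ℚ)).derivativeFun * E →
      ∀ N : ℕ,
        PowerSeries.coeff N E =
          (Nat.card {M : Multiset S //
              (M.map fun s => g • s) = M ∧ (M.map w).sum = N} : ℚ) := by
  classical
  intro E hE1 hODE N
  show PowerSeries.coeff N E = (FMAux.aN w g N : ℚ)
  induction N using Nat.strong_induction_on with
  | _ N ih =>
    match N with
    | 0 =>
      rw [PowerSeries.coeff_zero_eq_constantCoeff, hE1, FMAux.aN_zero w g hw1 hfin]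
      norm_num
    | (n + 1) =>
      set f : PowerSeries ℚ := (PowerSeries.mk fun j : ℕ =>
            ∑ m ∈ Finset.Icc 1 j,
              if m ∣ j then
                (m : ℚ)⁻¹ * (Nat.card {s : S // g ^ m • s = s ∧ w s = j / m} : ℚ)
              else 0) with hf
      have hco := congrArg (PowerSeries.coeff n) hODE
      rw [FMAux.coeff_derivativeFun, PowerSeries.coeff_mul] at hco
      have hterm : ∀ p ∈ Finset.HasAntidiagonal.antidiagonal n,
          PowerSeries.coeff p.1 f.derivativeFun * PowerSeries.coeff p.2 E
            = PowerSeries.coeff p.1 f.derivativeFun * (FMAux.aN w g p.2 : ℚ) := by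
        intro p hp
        rw [Finset.HasAntidiagonal.mem_antidiagonal] at hp
        rw [ih p.2 (by omega)]
      rw [Finset.sum_congr rfl hterm] at hco
      have hsum : ∑ p ∈ Finset.HasAntidiagonal.antidiagonal n,
          PowerSeries.coeff p.1 f.derivativeFun * (FMAux.aN w g p.2 : ℚ)
            = (((n + 1) * FMAux.aN w g (n + 1) : ℕ) : ℚ) := by
        rw [Finset.Nat.sum_antidiagonal_eq_sum_range_succ_mk]
        have hterm2 : ∀ k ∈ Finset.range (n + 1),
            PowerSeries.coeff k f.derivativeFun * (FMAux.aN w g (n - k) : ℚ)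
              = (((∑ m ∈ Finset.Icc 1 (k + 1),
                  if m ∣ (k + 1) then ((k + 1) / m) * FMAux.cN w g m ((k + 1) / m) else 0)
                    * FMAux.aN w g (n + 1 - (k + 1)) : ℕ) : ℚ) := by
          intro k hk
          rw [FMAux.coeff_derivativeFun, hf, PowerSeries.coeff_mk,
            show ((k : ℚ) + 1) = ((k + 1 : ℕ) : ℚ) from by push_cast; ring,
            FMAux.cast_b w g (k + 1) (by omega), ← Nat.cast_mul, Nat.succ_sub_succ]
        rw [Finset.sum_congr rfl hterm2,
          FMAux.keyN w g hw1 hfin (n + 1) hw, Nat.cast_sum,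
          ← FMAux.sum_shift (fun j => (((∑ m ∈ Finset.Icc 1 j,
              if m ∣ j then (j / m) * FMAux.cN w g m (j / m) else 0)
                * FMAux.aN w g (n + 1 - j) : ℕ) : ℚ)) (n + 1)]
      rw [hsum] at hco
      have hn1 : ((n : ℚ) + 1) ≠ 0 := by positivity
      have : PowerSeries.coeff (n + 1) E * ((n : ℚ) + 1)
          = (FMAux.aN w g (n + 1) : ℚ) * ((n : ℚ) + 1) := by
        rw [hco]
        push_cast
        ring
      have := mul_right_cancel₀ hn1 this
      exact_mod_cast this
end

section
/- Let K_{n,k} denote the number of isomorphism classes of k-trees with n+k vertices. Then K_{n,k-1} = K_{n,k} whenever k ≥ n − 1. -/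
/-- The complete graph on the vertices of a finset `V`. -/
def completeOn {α : Type*} (V : Finset α) : SimpleGraph α :=
  SimpleGraph.fromRel fun a b => a ∈ V ∧ b ∈ V

/-- The star graph joining the vertex `v` to every vertex of `K`. -/
def starTo {α : Type*} (v : α) (K : Finset α) : SimpleGraph α :=
  SimpleGraph.fromRel fun a b => a = v ∧ b ∈ K

/-- `IsKTree k V G` : the graph `G`, with vertex set (the finset) `V`, is a
`k`-tree.  Recursively: the complete graph on `k` vertices is a `k`-tree, and a
graph obtained from a `k`-tree by adjoining a new vertex joined to all the
vertices of a `k`-clique is a `k`-tree. -/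
inductive IsKTree {α : Type*} (k : ℕ) : Finset α → SimpleGraph α → Prop
  | base (V : Finset α) (h : V.card = k) : IsKTree k V (completeOn V)
  | step (V : Finset α) (G : SimpleGraph α) (v : α) (K : Finset α)
      (ht : IsKTree k V G) (hv : v ∉ V) (hK : K ⊆ V) (hcard : K.card = k)
      (hclique : G.IsClique K) [DecidableEq α] :
      IsKTree k (insert v V) (G ⊔ starTo v K)

/-- `numKTrees n k` is the number `K_{n,k}` of isomorphism classes of `k`-trees
with `n + k` vertices (equivalently, with `n` hedra). -/
noncomputable def numKTrees (n k : ℕ) : ℕ :=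
  Nat.card (Quot fun G G' : {G : SimpleGraph (Fin (n + k)) // IsKTree k Finset.univ G} =>
    Nonempty (G.val ≃g G'.val))

section Aux

variable {α β : Type*}

lemma completeOn_adj {V : Finset α} {a b : α} :
    (completeOn V).Adj a b ↔ a ≠ b ∧ a ∈ V ∧ b ∈ V := by
  simp only [completeOn, SimpleGraph.fromRel_adj]
  tauto

lemma starTo_adj {v : α} {K : Finset α} {a b : α} :
    (starTo v K).Adj a b ↔ a ≠ b ∧ ((a = v ∧ b ∈ K) ∨ (b = v ∧ a ∈ K)) := by
  simp only [starTo, SimpleGraph.fromRel_adj]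

/-- support of a k-tree is inside `V`. -/
lemma IsKTree.support {k : ℕ} {V : Finset α} {G : SimpleGraph α}
    (h : IsKTree k V G) : ∀ a b, G.Adj a b → a ∈ V ∧ b ∈ V := by
  induction h with
  | base V hV =>
      intro a b hab
      rw [completeOn_adj] at hab
      exact hab.2
  | step V G v K ht hv hK hcard hclique ih =>
      intro a b hab
      rcases hab with hab | hab
      · exact ⟨Finset.mem_insert_of_mem (ih a b hab).1,
          Finset.mem_insert_of_mem (ih a b hab).2⟩
      · rw [starTo_adj] at hab
        rcases hab.2 with ⟨rfl, hb⟩ | ⟨rfl, ha⟩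
        · exact ⟨Finset.mem_insert_self _ _, Finset.mem_insert_of_mem (hK hb)⟩
        · exact ⟨Finset.mem_insert_of_mem (hK ha), Finset.mem_insert_self _ _⟩

lemma IsKTree.k_le_card {k : ℕ} {V : Finset α} {G : SimpleGraph α}
    (h : IsKTree k V G) : k ≤ V.card := by
  induction h with
  | base V hV => exact hV.ge
  | step V G v K ht hv hK hcard hclique ih =>
      classical
      rw [Finset.card_insert_of_notMem hv]
      omega

lemma IsKTree.eq_complete {k : ℕ} {V : Finset α} {G : SimpleGraph α}
    (h : IsKTree k V G) (hc : V.card = k) : G = completeOn V := by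
  cases h with
  | base V hV => rfl
  | step V G v K ht hv hK hcard hclique =>
      classical
      have := ht.k_le_card
      rw [Finset.card_insert_of_notMem hv] at hc
      omega

end Aux

section MapLemmas

variable {α β : Type*}

lemma map_sup' (f : α ↪ β) (G H : SimpleGraph α) :
    (G ⊔ H).map f = G.map f ⊔ H.map f := by
  ext a b
  simp only [SimpleGraph.map_adj, SimpleGraph.sup_adj]
  constructor
  · rintro ⟨u, v, h | h, rfl, rfl⟩
    · exact Or.inl ⟨u, v, h, rfl, rfl⟩
    · exact Or.inr ⟨u, v, h, rfl, rfl⟩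
  · rintro (⟨u, v, h, rfl, rfl⟩ | ⟨u, v, h, rfl, rfl⟩)
    · exact ⟨u, v, Or.inl h, rfl, rfl⟩
    · exact ⟨u, v, Or.inr h, rfl, rfl⟩

lemma map_completeOn (f : α ↪ β) (V : Finset α) :
    (completeOn V).map f = completeOn (V.map f) := by
  ext a b
  simp only [SimpleGraph.map_adj, completeOn_adj, Finset.mem_map]
  constructor
  · rintro ⟨u, v, ⟨hne, hu, hv⟩, rfl, rfl⟩
    exact ⟨fun h => hne (f.injective h), ⟨u, hu, rfl⟩, ⟨v, hv, rfl⟩⟩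
  · rintro ⟨hne, ⟨u, hu, rfl⟩, ⟨v, hv, rfl⟩⟩
    exact ⟨u, v, ⟨fun h => hne (congrArg f h), hu, hv⟩, rfl, rfl⟩

lemma map_starTo (f : α ↪ β) (v : α) (K : Finset α) :
    (starTo v K).map f = starTo (f v) (K.map f) := by
  ext a b
  simp only [SimpleGraph.map_adj, starTo_adj, Finset.mem_map]
  constructor
  · rintro ⟨u, w, ⟨hne, h⟩, rfl, rfl⟩
    refine ⟨fun h => hne (f.injective h), ?_⟩
    rcases h with ⟨rfl, hw⟩ | ⟨rfl, hu⟩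
    · exact Or.inl ⟨rfl, ⟨w, hw, rfl⟩⟩
    · exact Or.inr ⟨rfl, ⟨u, hu, rfl⟩⟩
  · rintro ⟨hne, h⟩
    rcases h with ⟨ha, ⟨w, hw, rfl⟩⟩ | ⟨hb, ⟨u, hu, rfl⟩⟩
    · obtain rfl : a = f v := ha
      exact ⟨v, w, ⟨fun h => hne (congrArg f h), Or.inl ⟨rfl, hw⟩⟩, rfl, rfl⟩
    · obtain rfl : b = f v := hb
      exact ⟨u, v, ⟨fun h => hne (congrArg f h), Or.inr ⟨rfl, hu⟩⟩, rfl, rfl⟩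

/-- delete vertex `u` from a graph. -/
def delAt (u : α) (G : SimpleGraph α) : SimpleGraph α where
  Adj a b := G.Adj a b ∧ a ≠ u ∧ b ≠ u
  symm := ⟨by rintro a b ⟨h, ha, hb⟩; exact ⟨h.symm, hb, ha⟩⟩
  loopless := ⟨fun a h => G.loopless.irrefl a h.1⟩

@[simp] lemma delAt_adj {u : α} {G : SimpleGraph α} {a b : α} :
    (delAt u G).Adj a b ↔ G.Adj a b ∧ a ≠ u ∧ b ≠ u := Iff.rfl

lemma IsKTree.map {k : ℕ} {V : Finset α} {G : SimpleGraph α} (f : α ↪ β)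
    (h : IsKTree k V G) : IsKTree k (V.map f) (G.map f) := by
  classical
  induction h with
  | base V hV =>
      rw [map_completeOn]
      exact IsKTree.base _ (by simp [hV])
  | step V G v K ht hv hK hcard hclique ih =>
      rw [map_sup', map_starTo, Finset.map_insert]
      refine IsKTree.step _ _ _ _ ih (by simp [hv]) (Finset.map_subset_map.2 hK)
        (by simp [hcard]) ?_
      exact hclique.finsetMap

/-- reflection of `IsKTree` along an embedding. -/
lemma isKTree_of_map (f : α ↪ β) {k : ℕ} {W : Finset β} {H : SimpleGraph β}
    (h : IsKTree k W H) :
    ∀ (V : Finset α) (G : SimpleGraph α), W = V.map f → H = G.map f → IsKTree k V G := by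
  classical
  induction h with
  | base W hW =>
      intro V G hV hG
      subst hV
      have : G.map f = (completeOn V).map f := by rw [← hG, map_completeOn]
      rw [SimpleGraph.map_injective f this]
      exact IsKTree.base _ (by simpa using hW)
  | step W H v K ht hv hK hcard hclique ih =>
      intro V G hV hG
      -- v ∈ V.map f
      have hvV : v ∈ V.map f := by
        rw [← hV]; exact Finset.mem_insert_self _ _
      obtain ⟨v', hv'V, rfl⟩ := Finset.mem_map.1 hvV
      have hWV : W = (V.erase v').map f := by
        rw [Finset.map_erase, ← hV, Finset.erase_insert hv]
      -- pull back K
      set K' : Finset α := (V.erase v').filter (fun a => f a ∈ K) with hK'def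
      have hK'sub : K' ⊆ V.erase v' := Finset.filter_subset _ _
      have hKK' : K = K'.map f := by
        apply Finset.Subset.antisymm
        · intro x hx
          have hxW : x ∈ (V.erase v').map f := hWV ▸ hK hx
          obtain ⟨a, ha, rfl⟩ := Finset.mem_map.1 hxW
          exact Finset.mem_map_of_mem f (Finset.mem_filter.2 ⟨ha, hx⟩)
        · intro x hx
          obtain ⟨a, ha, rfl⟩ := Finset.mem_map.1 hx
          exact (Finset.mem_filter.1 ha).2
      -- the old graph is the image of G with v' deleted
      have hHG : H = (delAt v' G).map f := by
        ext x y
        constructor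
        · intro hxy
          have hle : (H ⊔ starTo (f v') K).Adj x y := Or.inl hxy
          rw [hG] at hle
          obtain ⟨a, b, hab, rfl, rfl⟩ := (SimpleGraph.map_adj f G _ _).1 hle
          have hxW := ht.support _ _ hxy
          have hx' : a ≠ v' := by
            rintro rfl
            exact hv (hxW.1)
          have hy' : b ≠ v' := by
            rintro rfl
            exact hv (hxW.2)
          exact (SimpleGraph.map_adj _ _ _ _).2 ⟨a, b, ⟨hab, hx', hy'⟩, rfl, rfl⟩
        · rw [SimpleGraph.map_adj]
          rintro ⟨a, b, ⟨hab, ha, hb⟩, rfl, rfl⟩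
          have : (G.map f).Adj (f a) (f b) := (SimpleGraph.map_adj _ _ _ _).2 ⟨a, b, hab, rfl, rfl⟩
          rw [← hG] at this
          rcases this with h | h
          · exact h
          · rw [starTo_adj] at h
            rcases h.2 with ⟨hfa, _⟩ | ⟨hfb, _⟩
            · exact absurd (f.injective hfa) ha
            · exact absurd (f.injective hfb) hb
      have hIH := ih (V.erase v') (delAt v' G) hWV hHG
      have hGeq : G = delAt v' G ⊔ starTo v' K' := by
        apply SimpleGraph.map_injective f
        rw [← hG, hHG, map_sup', map_starTo, hKK']
      have hcl : (delAt v' G).IsClique (K' : Set α) := by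
        have : ((delAt v' G).map f).IsClique ((K'.map f : Finset β) : Set β) := by
          rw [← hHG, ← hKK']
          exact hclique
        rwa [Finset.coe_map, SimpleGraph.isClique_map_image_iff] at this
      have hstep := IsKTree.step (V.erase v') (delAt v' G) v' K' hIH
        (Finset.notMem_erase _ _) hK'sub
        (by rw [← hcard, hKK', Finset.card_map]) hcl
      rw [Finset.insert_erase hv'V, ← hGeq] at hstep
      exact hstep

end MapLemmas

section ConeDel

variable {α β : Type*}

lemma completeOn_sup_star (u : α) (V : Finset α) [DecidableEq α] :
    completeOn V ⊔ starTo u V = completeOn (insert u V) := by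
  ext a b
  simp only [SimpleGraph.sup_adj, completeOn_adj, starTo_adj, Finset.mem_insert]
  constructor
  · rintro (⟨h, ha, hb⟩ | ⟨h, hor⟩)
    · exact ⟨h, Or.inr ha, Or.inr hb⟩
    · rcases hor with ⟨rfl, hb⟩ | ⟨rfl, ha⟩
      · exact ⟨h, Or.inl rfl, Or.inr hb⟩
      · exact ⟨h, Or.inr ha, Or.inl rfl⟩
  · rintro ⟨h, ha, hb⟩
    rcases ha with rfl | ha
    · rcases hb with rfl | hb
      · exact absurd rfl h
      · exact Or.inr ⟨h, Or.inl ⟨rfl, hb⟩⟩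
    · rcases hb with rfl | hb
      · exact Or.inr ⟨h, Or.inr ⟨rfl, ha⟩⟩
      · exact Or.inl ⟨h, ha, hb⟩

/-- the complete graph on `k+1` vertices is a `k`-tree. -/
lemma isKTree_complete_succ {k : ℕ} {V : Finset α} (h : V.card = k + 1) :
    IsKTree k V (completeOn V) := by
  classical
  obtain ⟨v, hv⟩ := Finset.card_pos.1 (by omega : 0 < V.card)
  have hstep := IsKTree.step (V.erase v) (completeOn (V.erase v)) v (V.erase v)
    (IsKTree.base _ (by rw [Finset.card_erase_of_mem hv, h])) (Finset.notMem_erase _ _)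
    (Finset.Subset.refl _) (by rw [Finset.card_erase_of_mem hv, h])
    (by intro a ha b hb hab; exact completeOn_adj.2 ⟨hab, ha, hb⟩)
  rwa [completeOn_sup_star, Finset.insert_erase hv] at hstep

lemma adj_step_vertex {G : SimpleGraph α} {V K : Finset α} {v w : α}
    (hsupp : ∀ a b, G.Adj a b → a ∈ V ∧ b ∈ V) (hv : v ∉ V) (hK : K ⊆ V) :
    (G ⊔ starTo v K).Adj v w ↔ w ∈ K := by
  constructor
  · rintro (h | h)
    · exact absurd (hsupp _ _ h).1 hv
    · rw [starTo_adj] at h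
      rcases h.2 with ⟨_, hw⟩ | ⟨rfl, hv'⟩
      · exact hw
      · exact absurd (hK hv') hv
  · intro hw
    have hne : v ≠ w := fun h => hv (h ▸ hK hw)
    exact Or.inr (starTo_adj.2 ⟨hne, Or.inl ⟨rfl, hw⟩⟩)

/-- cone construction: adding a universal vertex to a `k`-tree gives a `(k+1)`-tree. -/
lemma IsKTree.cone {k : ℕ} {V : Finset α} {G : SimpleGraph α} [dec : DecidableEq α]
    (h : IsKTree k V G) {u : α} (hu : u ∉ V) :
    IsKTree (k + 1) (insert u V) (G ⊔ starTo u V) := by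
  induction h with
  | base V hV =>
      rw [completeOn_sup_star]
      exact IsKTree.base _ (by rw [Finset.card_insert_of_notMem hu, hV])
  | @step V G v K ht hv hK hcard hclique inst ih =>
      obtain rfl : inst = dec := Subsingleton.elim _ _
      have huv : u ≠ v := fun h => hu (h ▸ Finset.mem_insert_self _ _)
      have huV : u ∉ V := fun h => hu (Finset.mem_insert_of_mem h)
      have hstep := IsKTree.step (insert u V) (G ⊔ starTo u V) v (insert u K)
        (ih huV) (by simp [Ne.symm huv, hv]) (Finset.insert_subset_insert _ hK)
        (by rw [Finset.card_insert_of_notMem (fun h => huV (hK h)), hcard])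
        (by
          rw [Finset.coe_insert]
          refine (hclique.mono le_sup_left).insert ?_
          intro b hb hub
          exact Or.inr (starTo_adj.2 ⟨hub, Or.inl ⟨rfl, hK hb⟩⟩))
      have hins : insert v (insert u V) = insert u (insert v V) :=
        Finset.insert_comm _ _ _
      have hgraph : (G ⊔ starTo u V) ⊔ starTo v (insert u K)
          = (G ⊔ starTo v K) ⊔ starTo u (insert v V) := by
        ext a b
        simp only [SimpleGraph.sup_adj, starTo_adj, Finset.mem_insert]
        tauto
      rwa [hins, hgraph] at hstep

/-- deletion: removing a universal vertex from a `(k+1)`-tree gives a `k`-tree. -/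
lemma IsKTree.del {k : ℕ} {V : Finset α} {G : SimpleGraph α} [dec : DecidableEq α]
    (h : IsKTree (k + 1) V G) {u : α} (hu : u ∈ V)
    (huniv : ∀ w ∈ V, w ≠ u → G.Adj u w) :
    IsKTree k (V.erase u) (delAt u G) := by
  induction h with
  | base V hV =>
      have : delAt u (completeOn V) = completeOn (V.erase u) := by
        ext a b
        simp only [delAt_adj, completeOn_adj, Finset.mem_erase]
        tauto
      rw [this]
      exact IsKTree.base _ (by rw [Finset.card_erase_of_mem hu, hV]; omega)
  | @step V G v K ht hv hK hcard hclique inst ih =>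
      obtain rfl : inst = dec := Subsingleton.elim _ _
      by_cases huv : u = v
      · subst huv
        -- the universal vertex is the newly added one; then K = V and G complete
        have hVK : K = V := by
          refine Finset.Subset.antisymm hK (fun w hw => ?_)
          have hwu : w ≠ u := fun h => hv (h ▸ hw)
          exact (adj_step_vertex ht.support hv hK).1
            (huniv w (Finset.mem_insert_of_mem hw) hwu)
        have hVcard : V.card = k + 1 := by rw [← hVK, hcard]
        have hGc : G = completeOn V := ht.eq_complete hVcard
        have hdel : delAt u (G ⊔ starTo u K) = G := by
          ext a b
          simp only [delAt_adj, SimpleGraph.sup_adj, starTo_adj]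
          constructor
          · rintro ⟨h | h, ha, hb⟩
            · exact h
            · rcases h.2 with ⟨rfl, _⟩ | ⟨rfl, _⟩
              · exact absurd rfl ha
              · exact absurd rfl hb
          · intro h
            have hmem := ht.support _ _ h
            exact ⟨Or.inl h, fun e => hv (e ▸ hmem.1), fun e => hv (e ▸ hmem.2)⟩
        rw [hdel, Finset.erase_insert hv, hGc]
        exact isKTree_complete_succ hVcard
      · have huV : u ∈ V := Finset.mem_of_mem_insert_of_ne hu huv
        have huK : u ∈ K := by
          have := huniv v (Finset.mem_insert_self _ _) (fun h => huv h.symm)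
          exact (adj_step_vertex ht.support hv hK).1 this.symm
        have huniv' : ∀ w ∈ V, w ≠ u → G.Adj u w := by
          intro w hw hwu
          have hadj := huniv w (Finset.mem_insert_of_mem hw) hwu
          rcases hadj with h | h
          · exact h
          · rw [starTo_adj] at h
            rcases h.2 with ⟨h1, _⟩ | ⟨h1, _⟩
            · exact absurd h1 huv
            · exact absurd h1 (fun e => hv (e ▸ hw))
        have hstep := IsKTree.step (V.erase u) (delAt u G) v (K.erase u)
          (ih huV huniv') (fun h => hv (Finset.mem_of_mem_erase h))
          (Finset.erase_subset_erase _ hK)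
          (show (K.erase u).card = k by rw [Finset.card_erase_of_mem huK, hcard]; rfl)
          (by
            intro a ha b hb hab
            rw [Finset.coe_erase, Set.mem_diff, Set.mem_singleton_iff] at ha hb
            exact ⟨hclique ha.1 hb.1 hab, ha.2, hb.2⟩)
        have hins : insert v (V.erase u) = (insert v V).erase u := by
          ext a
          simp only [Finset.mem_insert, Finset.mem_erase]
          constructor
          · rintro (rfl | ⟨h1, h2⟩)
            · exact ⟨fun e => huv e.symm, Or.inl rfl⟩
            · exact ⟨h1, Or.inr h2⟩
          · rintro ⟨h1, rfl | h2⟩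
            · exact Or.inl rfl
            · exact Or.inr ⟨h1, h2⟩
        have hgraph : delAt u G ⊔ starTo v (K.erase u) = delAt u (G ⊔ starTo v K) := by
          ext a b
          simp only [delAt_adj, SimpleGraph.sup_adj, starTo_adj, Finset.mem_erase]
          constructor
          · rintro (⟨h, ha, hb⟩ | ⟨hne, ⟨rfl, hb1, hb2⟩ | ⟨rfl, ha1, ha2⟩⟩)
            · exact ⟨Or.inl h, ha, hb⟩
            · exact ⟨Or.inr ⟨hne, Or.inl ⟨rfl, hb2⟩⟩, fun e => huv e.symm, hb1⟩
            · exact ⟨Or.inr ⟨hne, Or.inr ⟨rfl, ha2⟩⟩, ha1, fun e => huv e.symm⟩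
          · rintro ⟨h | ⟨hne, ⟨rfl, hb⟩ | ⟨rfl, ha⟩⟩, ha', hb'⟩
            · exact Or.inl ⟨h, ha', hb'⟩
            · exact Or.inr ⟨hne, Or.inl ⟨rfl, hb', hb⟩⟩
            · exact Or.inr ⟨hne, Or.inr ⟨rfl, ha', ha⟩⟩
        rwa [hins, hgraph] at hstep

end ConeDel

section Invariants

variable {α : Type*}

lemma IsKTree.invariants {k : ℕ} {V : Finset α} {G : SimpleGraph α} [dec : DecidableEq α]
    (h : IsKTree k V G) :
    (∀ S : Finset α, G.IsClique (S : Set α) → S.card ≤ k + 1) ∧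
    (∀ S : Finset α, S ⊆ V → G.IsClique (S : Set α) → S.card = k →
        V.card = k ∨ ∃ w ∈ V, w ∉ S ∧ G.IsClique ((insert w S : Finset α) : Set α)) ∧
    (V.card = k ∨ ∃ U : Finset α, U ⊆ V ∧ 2 * k + 2 ≤ U.card + V.card ∧
        ∀ u ∈ U, ∀ w ∈ V, w ≠ u → G.Adj u w) := by
  induction h with
  | base V hV =>
      refine ⟨?_, fun S hSV hS hScard => Or.inl hV, Or.inl hV⟩
      intro S hS
      by_cases h1 : S.card ≤ 1
      · omega
      · have hSV : S ⊆ V := by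
          intro x hx
          obtain ⟨y, hy, hyx⟩ := Finset.exists_mem_ne (by omega : 1 < S.card) x
          have := hS (Finset.mem_coe.2 hx) (Finset.mem_coe.2 hy) (Ne.symm hyx)
          exact (completeOn_adj.1 this).2.1
        have := Finset.card_le_card hSV
        omega
  | @step V G v K ht hv hK hcard hclique inst ih =>
      obtain rfl : inst = dec := Subsingleton.elim _ _
      obtain ⟨ihB, ihC, ihD⟩ := ih
      have hsupp := ht.support
      have hadjv : ∀ w, (G ⊔ starTo v K).Adj v w ↔ w ∈ K :=
        fun w => adj_step_vertex hsupp hv hK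
      -- cliques of the new graph not containing v are cliques of G
      have hcliqueG : ∀ S : Finset α, v ∉ S → (G ⊔ starTo v K).IsClique (S : Set α) →
          G.IsClique (S : Set α) := by
        intro S hvS hS a ha b hb hab
        rcases hS ha hb hab with h' | h'
        · exact h'
        · rw [starTo_adj] at h'
          rcases h'.2 with ⟨rfl, _⟩ | ⟨rfl, _⟩
          · exact absurd ha hvS
          · exact absurd hb hvS
      -- (B)
      have hB : ∀ S : Finset α, (G ⊔ starTo v K).IsClique (S : Set α) → S.card ≤ k + 1 := by
        intro S hS
        by_cases hvS : v ∈ S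
        · have hsub : S.erase v ⊆ K := by
            intro x hx
            obtain ⟨hxv, hxS⟩ := Finset.mem_erase.1 hx
            exact (hadjv x).1 (hS (Finset.mem_coe.2 hvS) (Finset.mem_coe.2 hxS)
              (Ne.symm hxv))
          have h1 := Finset.card_le_card hsub
          have h2 := Finset.card_erase_add_one hvS
          omega
        · exact ihB S (hcliqueG S hvS hS)
      refine ⟨hB, ?_, ?_⟩
      · -- (C)
        intro S hSV hS hScard
        refine Or.inr ?_
        by_cases hvS : v ∈ S
        · -- S \ {v} ⊆ K ; pick w ∈ K \ S
          have hsub : S.erase v ⊆ K := by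
            intro x hx
            obtain ⟨hxv, hxS⟩ := Finset.mem_erase.1 hx
            exact (hadjv x).1 (hS (Finset.mem_coe.2 hvS) (Finset.mem_coe.2 hxS)
              (Ne.symm hxv))
          have hk1 : 1 ≤ k := by
            have : 0 < S.card := Finset.card_pos.2 ⟨v, hvS⟩
            omega
          have hce : (S.erase v).card = k - 1 := by
            have := Finset.card_erase_add_one hvS; omega
          have hex : ∃ w ∈ K, w ∉ S.erase v := by
            by_contra hcon
            push_neg at hcon
            have := Finset.card_le_card hcon
            omega
          obtain ⟨w, hwK, hwS'⟩ := hex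
          have hwS : w ∉ S := by
            intro hw
            rcases eq_or_ne w v with rfl | hne
            · exact hv (hK hwK)
            · exact hwS' (Finset.mem_erase.2 ⟨hne, hw⟩)
          refine ⟨w, Finset.mem_insert_of_mem (hK hwK), hwS, ?_⟩
          rw [Finset.coe_insert]
          refine hS.insert ?_
          intro b hb hwb
          rcases eq_or_ne b v with rfl | hbv
          · exact ((hadjv w).2 hwK).symm
          · have hbK : b ∈ K := hsub (Finset.mem_erase.2 ⟨hbv, hb⟩)
            exact Or.inl (hclique (Finset.mem_coe.2 hwK) (Finset.mem_coe.2 hbK) hwb)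
        · -- S ⊆ V, clique of G
          have hSV' : S ⊆ V := by
            intro x hx
            rcases Finset.mem_insert.1 (hSV hx) with rfl | h'
            · exact absurd hx hvS
            · exact h'
          have hSG := hcliqueG S hvS hS
          rcases ihC S hSV' hSG hScard with hVk | ⟨w, hwV, hwS, hw⟩
          · -- V complete of size k, so S = V = K ; extend by v
            have hSVeq : S = V := Finset.eq_of_subset_of_card_le hSV' (by omega)
            have hKVeq : K = V := Finset.eq_of_subset_of_card_le hK (by omega)
            refine ⟨v, Finset.mem_insert_self _ _, fun hvs => hvS hvs, ?_⟩
            rw [Finset.coe_insert]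
            refine hS.insert ?_
            intro b hb hvb
            rw [hSVeq, ← hKVeq] at hb
            exact (hadjv b).2 hb
          · exact ⟨w, Finset.mem_insert_of_mem hwV, hwS,
              by rw [Finset.coe_insert] at *; exact hw.mono le_sup_left⟩
      · -- (D)
        refine Or.inr ?_
        by_cases hVk : V.card = k
        · -- old graph complete on k vertices, new graph complete on k+1
          have hKVeq : K = V := Finset.eq_of_subset_of_card_le hK (by omega)
          have hGc : G = completeOn V := ht.eq_complete hVk
          refine ⟨insert v V, Finset.Subset.refl _, ?_, ?_⟩
          · rw [Finset.card_insert_of_notMem hv]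
            omega
          · intro u hu w hw hwu
            rw [hGc, hKVeq, completeOn_sup_star]
            exact completeOn_adj.2 ⟨Ne.symm hwu, hu, hw⟩
        · -- general case : |V| > k
          obtain ⟨U, hUV, hUcard, hUuniv⟩ := ihD.resolve_left hVk
          obtain ⟨w, hwV, hwK, hcliquewK⟩ := (ihC K hK hclique hcard).resolve_left hVk
          -- U is contained in the (k+1)-clique insert w K
          have hUsub : U ⊆ insert w K := by
            intro u hu
            by_contra huno
            have huV : u ∈ V := hUV hu
            have hcl : G.IsClique ((insert u (insert w K) : Finset α) : Set α) := by
              rw [Finset.coe_insert]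
              refine hcliquewK.insert ?_
              intro b hb hub
              rw [Finset.coe_insert, Set.mem_insert_iff] at hb
              have hbV : b ∈ V := by
                rcases hb with rfl | hb
                · exact hwV
                · exact hK (Finset.mem_coe.1 hb)
              exact hUuniv u hu b hbV (Ne.symm hub)
            have hcard2 : (insert u (insert w K) : Finset α).card = k + 2 := by
              rw [Finset.card_insert_of_notMem huno,
                Finset.card_insert_of_notMem hwK, hcard]
            have := ihB _ hcl
            omega
          have hUK : U.card ≤ (U ∩ K).card + 1 := by
            have h1 : U ⊆ insert w (U ∩ K) := by
              intro u hu
              rcases Finset.mem_insert.1 (hUsub hu) with rfl | huK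
              · exact Finset.mem_insert_self _ _
              · exact Finset.mem_insert_of_mem (Finset.mem_inter.2 ⟨hu, huK⟩)
            calc U.card ≤ (insert w (U ∩ K)).card := Finset.card_le_card h1
              _ ≤ (U ∩ K).card + 1 := Finset.card_insert_le _ _
          refine ⟨U ∩ K, fun x hx => Finset.mem_insert_of_mem
            (hUV (Finset.mem_inter.1 hx).1), ?_, ?_⟩
          · rw [Finset.card_insert_of_notMem hv]
            omega
          · intro u hu x hx hxu
            have huU : u ∈ U := (Finset.mem_inter.1 hu).1
            have huK : u ∈ K := (Finset.mem_inter.1 hu).2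
            rcases Finset.mem_insert.1 hx with rfl | hxV
            · exact ((hadjv u).2 huK).symm
            · exact Or.inl (hUuniv u huU x hxV hxu)

lemma IsKTree.exists_universal {k : ℕ} {V : Finset α} {G : SimpleGraph α} [DecidableEq α]
    (h : IsKTree k V G) (h1 : 1 ≤ k) (h2 : V.card ≤ 2 * k + 1) :
    ∃ u ∈ V, ∀ w ∈ V, w ≠ u → G.Adj u w := by
  rcases h.invariants.2.2 with hVk | ⟨U, hUV, hUcard, hUuniv⟩
  · obtain ⟨u, hu⟩ := Finset.card_pos.1 (by omega : 0 < V.card)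
    refine ⟨u, hu, fun w hw hwu => ?_⟩
    rw [h.eq_complete hVk]
    exact completeOn_adj.2 ⟨Ne.symm hwu, hu, hw⟩
  · have : 0 < U.card := by omega
    obtain ⟨u, hu⟩ := Finset.card_pos.1 this
    exact ⟨u, hUV hu, hUuniv u hu⟩

end Invariants

section ConeO

variable {α β : Type*}

/-- cone of a graph over an `Option` type. -/
def coneO [Fintype α] (G : SimpleGraph α) : SimpleGraph (Option α) :=
  G.map Function.Embedding.some ⊔
    starTo none (Finset.univ.map Function.Embedding.some)

lemma coneO_adj_some_some [Fintype α] {G : SimpleGraph α} {a b : α} :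
    (coneO G).Adj (some a) (some b) ↔ G.Adj a b := by
  simp only [coneO, SimpleGraph.sup_adj, SimpleGraph.map_adj, starTo_adj]
  constructor
  · rintro (⟨u, v, h, hu, hv⟩ | ⟨h, ⟨h', _⟩ | ⟨h', _⟩⟩)
    · obtain rfl : u = a := Option.some_injective _ hu
      obtain rfl : v = b := Option.some_injective _ hv
      exact h
    · exact absurd h' (by simp)
    · exact absurd h' (by simp)
  · intro h
    exact Or.inl ⟨a, b, h, rfl, rfl⟩

lemma coneO_adj_none_some [Fintype α] {G : SimpleGraph α} {a : α} :
    (coneO G).Adj none (some a) := by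
  refine Or.inr (starTo_adj.2 ⟨by simp, Or.inl ⟨rfl, ?_⟩⟩)
  exact Finset.mem_map_of_mem _ (Finset.mem_univ a)

lemma univ_option_eq [Fintype α] [DecidableEq α] :
    (Finset.univ : Finset (Option α)) =
      insert none (Finset.univ.map Function.Embedding.some) := by
  ext x
  cases x <;> simp [Function.Embedding.some]

lemma univ_option_erase [Fintype α] [DecidableEq α] :
    (Finset.univ : Finset (Option α)).erase none =
      Finset.univ.map Function.Embedding.some := by
  ext x
  cases x <;> simp [Function.Embedding.some]

lemma isKTree_coneO [Fintype α] [DecidableEq α] {k : ℕ} {G : SimpleGraph α}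
    (h : IsKTree k Finset.univ G) : IsKTree (k + 1) Finset.univ (coneO G) := by
  have h1 := (h.map Function.Embedding.some).cone
    (u := (none : Option α)) (by simp [Function.Embedding.some])
  rwa [← univ_option_eq] at h1

/-- transporting adjacency through `map` along an equiv -/
lemma map_equiv_adj {G : SimpleGraph α} (e : α ≃ β) {x y : β} :
    (G.map e.toEmbedding).Adj x y ↔ G.Adj (e.symm x) (e.symm y) := by
  rw [← SimpleGraph.comap_symm]
  rfl

/-- swapping two universal vertices is an automorphism. -/
def swapIso (X : SimpleGraph α) [DecidableEq α] (u v : α)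
    (hu : ∀ w, w ≠ u → X.Adj u w) (hv : ∀ w, w ≠ v → X.Adj v w) : X ≃g X := by
  refine ⟨Equiv.swap u v, ?_⟩
  have key : ∀ a b, X.Adj a b → X.Adj (Equiv.swap u v a) (Equiv.swap u v b) := by
    intro a b hab
    by_cases hau : a = u
    · subst hau
      rw [Equiv.swap_apply_left]
      by_cases hbv : b = v
      · subst hbv
        rw [Equiv.swap_apply_right]
        exact hv a hab.ne
      · rw [Equiv.swap_apply_of_ne_of_ne (Ne.symm hab.ne) hbv]
        exact hv b hbv
    · by_cases hav : a = v
      · subst hav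
        rw [Equiv.swap_apply_right]
        by_cases hbu : b = u
        · subst hbu
          rw [Equiv.swap_apply_left]
          exact hu a hab.ne
        · rw [Equiv.swap_apply_of_ne_of_ne hbu (Ne.symm hab.ne)]
          exact hu b hbu
      · rw [Equiv.swap_apply_of_ne_of_ne hau hav]
        by_cases hbu : b = u
        · subst hbu
          rw [Equiv.swap_apply_left]
          exact (hv a hav).symm
        · by_cases hbv : b = v
          · subst hbv
            rw [Equiv.swap_apply_right]
            exact (hu a hau).symm
          · rw [Equiv.swap_apply_of_ne_of_ne hbu hbv]
            exact hab
  intro a b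
  constructor
  · intro h
    have := key _ _ h
    simpa [Equiv.swap_apply_self] using this
  · exact key a b

/-- a graph on `Option α` whose `none` vertex is universal is a cone. -/
lemma eq_coneO_of_none_universal [Fintype α] {X : SimpleGraph (Option α)}
    (h : ∀ a : α, X.Adj none (some a)) :
    X = coneO (X.comap some) := by
  ext x y
  cases x with
  | none =>
      cases y with
      | none => simp
      | some b => simp [h b, coneO_adj_none_some]
  | some a =>
      cases y with
      | none =>
          constructor
          · intro h'
            exact (coneO_adj_none_some (a := a)).symm
          · intro _
            exact (h a).symm
      | some b =>
          rw [coneO_adj_some_some]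
          rfl

/-- iso of cones from an iso of the bases. -/
def coneOIso [Fintype α] [Fintype β] {G : SimpleGraph α} {H : SimpleGraph β}
    (φ : G ≃g H) : coneO G ≃g coneO H := by
  refine ⟨Equiv.optionCongr φ.toEquiv, ?_⟩
  intro x y
  cases x with
  | none =>
      cases y with
      | none => simp
      | some b =>
          simp only [Equiv.optionCongr_apply, Option.map_none, Option.map_some]
          exact iff_of_true coneO_adj_none_some coneO_adj_none_some
  | some a =>
      cases y with
      | none =>
          simp only [Equiv.optionCongr_apply, Option.map_none, Option.map_some]
          exact iff_of_true coneO_adj_none_some.symm coneO_adj_none_some.symm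
      | some b =>
          simp only [Equiv.optionCongr_apply, Option.map_some]
          rw [coneO_adj_some_some, coneO_adj_some_some]
          exact φ.map_adj_iff

/-- cancellation: isomorphic cones have isomorphic bases. -/
lemma base_iso_of_coneO_iso [Fintype α] [Fintype β] [DecidableEq β]
    {G : SimpleGraph α} {H : SimpleGraph β}
    (h : Nonempty (coneO G ≃g coneO H)) : Nonempty (G ≃g H) := by
  obtain ⟨φ⟩ := h
  have hnoneH : ∀ w, w ≠ (none : Option β) → (coneO H).Adj none w := by
    intro w hw
    cases w with
    | none => exact absurd rfl hw
    | some b => exact coneO_adj_none_some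
  have hu : ∀ w, w ≠ φ none → (coneO H).Adj (φ none) w := by
    intro w hw
    have : (coneO H).Adj (φ none) (φ (φ.symm w)) := by
      rw [φ.map_adj_iff]
      have hne : φ.symm w ≠ none := by
        intro h'
        exact hw (by rw [← h']; simp)
      cases h' : φ.symm w with
      | none => exact absurd h' hne
      | some a => exact coneO_adj_none_some
    simpa using this
  let σ : coneO H ≃g coneO H := swapIso (coneO H) (φ none) none hu hnoneH
  let ψ : coneO G ≃g coneO H := φ.trans σ
  have hψnone : ψ.toEquiv none = none := by
    show σ (φ none) = none
    exact Equiv.swap_apply_left _ _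
  have hψsome : ∀ a, ∃ b, ψ.toEquiv (some a) = some b := by
    intro a
    cases h' : ψ.toEquiv (some a) with
    | none =>
        exfalso
        have := ψ.toEquiv.injective (h'.trans hψnone.symm)
        exact Option.some_ne_none a this
    | some b => exact ⟨b, rfl⟩
  let e : α ≃ β := Equiv.removeNone ψ.toEquiv
  have he : ∀ a, ψ.toEquiv (some a) = some (e a) := by
    intro a
    exact (Equiv.removeNone_some _ (hψsome a)).symm
  refine ⟨⟨e, ?_⟩⟩
  intro a b
  rw [← coneO_adj_some_some (G := H), ← coneO_adj_some_some (G := G), ← he, ← he]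
  exact ψ.map_adj_iff

end ConeO

section Main

variable {α : Type*}

lemma exists_base [Fintype α] [DecidableEq α] {k : ℕ} {X : SimpleGraph (Option α)}
    (hX : IsKTree (k + 1) Finset.univ X)
    (hcard : (Finset.univ : Finset (Option α)).card ≤ 2 * (k + 1) + 1) :
    ∃ Z : SimpleGraph α, IsKTree k Finset.univ Z ∧ Nonempty (X ≃g coneO Z) := by
  obtain ⟨u, hu, huniv⟩ := hX.exists_universal (by omega) hcard
  set σ : Option α ≃ Option α := Equiv.swap u none with hσ
  set Y : SimpleGraph (Option α) := X.map σ.toEmbedding with hYdef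
  have hY : IsKTree (k + 1) Finset.univ Y := by
    have := hX.map σ.toEmbedding
    rwa [Finset.map_univ_equiv] at this
  have hnone : ∀ a : α, Y.Adj none (some a) := by
    intro a
    rw [hYdef, map_equiv_adj]
    have h1 : σ.symm none = u := by
      rw [hσ, Equiv.symm_swap, Equiv.swap_apply_right]
    have h2 : σ.symm (some a) ≠ u := by
      rw [hσ, Equiv.symm_swap]
      intro hcon
      have := congrArg (Equiv.swap u none) hcon
      rw [Equiv.swap_apply_self, Equiv.swap_apply_left] at this
      exact Option.some_ne_none a this
    rw [h1]
    exact huniv _ (Finset.mem_univ _) h2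
  set Z : SimpleGraph α := Y.comap some with hZdef
  have hYZ : Y = coneO Z := eq_coneO_of_none_universal hnone
  have hdel : delAt none Y = Z.map Function.Embedding.some := by
    ext x y
    cases x with
    | none => simp [delAt_adj, SimpleGraph.map_adj', Function.Embedding.some]
    | some a =>
        cases y with
        | none => simp [delAt_adj, SimpleGraph.map_adj', Function.Embedding.some]
        | some b =>
            simp only [delAt_adj, SimpleGraph.map_adj', Function.Embedding.some,
              Function.Embedding.coeFn_mk]
            constructor
            · rintro ⟨h, _, _⟩
              exact ⟨h.ne, a, b, h, rfl, rfl⟩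
            · rintro ⟨_, a', b', h, ha, hb⟩
              obtain rfl : a' = a := Option.some_injective _ ha
              obtain rfl : b' = b := Option.some_injective _ hb
              exact ⟨h, by simp, by simp⟩
  have hZ : IsKTree k Finset.univ Z := by
    have hdel' := hY.del (u := (none : Option α)) (Finset.mem_univ _) (by
      intro w _ hw
      cases w with
      | none => exact absurd rfl hw
      | some a => exact hnone a)
    rw [univ_option_erase, hdel] at hdel'
    exact isKTree_of_map Function.Embedding.some hdel' Finset.univ Z rfl rfl
  exact ⟨Z, hZ, ⟨hYZ ▸ SimpleGraph.Iso.map σ X⟩⟩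

end Main


/-- Stability: `K_{n,k-1} = K_{n,k}` whenever `k ≥ n - 1`. -/
theorem numKTrees_stable (n k : ℕ) (h : n - 1 ≤ k) :
    numKTrees n (k - 1) = numKTrees n k := by
  cases k with
  | zero => rfl
  | succ k' =>
    have hn : n ≤ k' + 2 := by omega
    show numKTrees n k' = numKTrees n (k' + 1)
    unfold numKTrees
    let ε : Fin (n + (k' + 1)) ≃ Option (Fin (n + k')) := finSuccEquiv (n + k')
    let A := {G : SimpleGraph (Fin (n + k')) // IsKTree k' Finset.univ G}
    let B := {G : SimpleGraph (Fin (n + (k' + 1))) // IsKTree (k' + 1) Finset.univ G}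
    -- forward map : cone construction
    let f : A → B := fun p => ⟨(coneO p.1).map ε.symm.toEmbedding, by
      have h1 := isKTree_coneO p.2
      have h2 := h1.map ε.symm.toEmbedding
      rwa [Finset.map_univ_equiv] at h2⟩
    have fiso : ∀ p : A, Nonempty ((f p).1 ≃g coneO p.1) :=
      fun p => ⟨(SimpleGraph.Iso.map ε.symm (coneO p.1)).symm⟩
    -- backward map : delete a universal vertex
    have hcard : (Finset.univ : Finset (Option (Fin (n + k')))).card ≤ 2 * (k' + 1) + 1 := by
      rw [Finset.card_univ, Fintype.card_option, Fintype.card_fin]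
      omega
    have hg : ∀ p : B, ∃ Z : SimpleGraph (Fin (n + k')),
        IsKTree k' Finset.univ Z ∧ Nonempty (p.1.map ε.toEmbedding ≃g coneO Z) := by
      intro p
      refine exists_base ?_ hcard
      have := p.2.map ε.toEmbedding
      rwa [Finset.map_univ_equiv] at this
    let g : B → A := fun p => ⟨(hg p).choose, (hg p).choose_spec.1⟩
    have gspec : ∀ p : B, Nonempty (p.1 ≃g coneO (g p).1) := by
      intro p
      obtain ⟨ψ⟩ := (hg p).choose_spec.2
      exact ⟨(SimpleGraph.Iso.map ε p.1).trans ψ⟩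
    -- respect isomorphism
    have resp_f : ∀ p q : A, Nonempty (p.1 ≃g q.1) → Nonempty ((f p).1 ≃g (f q).1) := by
      intro p q ⟨φ⟩
      obtain ⟨a⟩ := fiso p
      obtain ⟨b⟩ := fiso q
      exact ⟨a.trans ((coneOIso φ).trans b.symm)⟩
    have resp_g : ∀ p q : B, Nonempty (p.1 ≃g q.1) → Nonempty ((g p).1 ≃g (g q).1) := by
      intro p q ⟨φ⟩
      obtain ⟨a⟩ := gspec p
      obtain ⟨b⟩ := gspec q
      exact base_iso_of_coneO_iso ⟨a.symm.trans (φ.trans b)⟩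
    refine Nat.card_congr ⟨Quot.map f resp_f, Quot.map g resp_g, ?_, ?_⟩
    · intro x
      induction x using Quot.ind with
      | _ p =>
          refine Quot.sound ?_
          obtain ⟨a⟩ := gspec (f p)
          obtain ⟨b⟩ := fiso p
          exact base_iso_of_coneO_iso ⟨a.symm.trans b⟩
    · intro x
      induction x using Quot.ind with
      | _ p =>
          refine Quot.sound ?_
          obtain ⟨a⟩ := fiso (g p)
          obtain ⟨b⟩ := gspec p
          exact ⟨a.trans b.symm⟩
end

section
/- (Otter's dissimilarity characteristic theorem) In any finite tree T, the number of vertex orbits under the automorphism group of T is exactly one more than the number of orbits of edges that are not symmetry edges, where a symmetry edge is an edge whose two endpoints are swapped by some automorphism of T. -/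
/-- A symmetry edge of a graph: an edge whose two endpoints are swapped by some
automorphism. -/
def IsSymmetryEdge {V : Type*} (T : SimpleGraph V) (e : Sym2 V) : Prop :=
  ∃ (φ : T ≃g T) (u v : V), e = s(u, v) ∧ φ u = v ∧ φ v = u

open SimpleGraph

namespace OtterAux
set_option linter.unusedSectionVars false

variable {V : Type*} [Fintype V]

/-- The set of vertices reachable from `u` after deleting edge `{u,v}` (the "side of `u`"). -/
def side (T : SimpleGraph V) (u v : V) : Set V :=
  {x | (T.deleteEdges {s(u, v)}).Reachable u x}

/-- Cardinality of `side`. -/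
noncomputable def aa (T : SimpleGraph V) (u v : V) : ℕ := (side T u v).ncard

variable {T : SimpleGraph V}

lemma del_comm (u v : V) : T.deleteEdges {s(u, v)} = T.deleteEdges {s(v, u)} := by
  rw [Sym2.eq_swap]

lemma mem_side_self (u v : V) : u ∈ side T u v := Reachable.refl u

lemma side_nonempty (u v : V) : (side T u v).Nonempty := ⟨u, mem_side_self u v⟩

lemma not_reachable_del (hT : T.IsTree) {u v : V} (h : T.Adj u v) :
    ¬ (T.deleteEdges {s(u, v)}).Reachable u v := by
  have hb := (isAcyclic_iff_forall_adj_isBridge.mp hT.IsAcyclic) h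
  exact isBridge_iff.mp hb

lemma not_mem_side (hT : T.IsTree) {u v : V} (h : T.Adj u v) : v ∉ side T u v :=
  not_reachable_del hT h

lemma self_not_mem_side_swap (hT : T.IsTree) {u v : V} (h : T.Adj u v) : u ∉ side T v u := by
  intro hu
  exact not_reachable_del hT h.symm hu

/-- every vertex lies on one of the two sides of an edge -/
lemma cover (hT : T.IsTree) {u v : V} (h : T.Adj u v) (x : V) :
    x ∈ side T u v ∨ x ∈ side T v u := by
  have key : ∀ {y w : V} (_ : T.Walk y w), w = u → y ∈ side T u v ∨ y ∈ side T v u := by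
    intro y w p
    induction p with
    | nil => rintro rfl; exact Or.inl (mem_side_self _ _)
    | @cons a b c hadj q ih =>
      intro hcu
      by_cases he : s(a, b) = s(u, v)
      · rcases Sym2.eq_iff.mp he with ⟨rfl, rfl⟩ | ⟨rfl, rfl⟩
        · exact Or.inl (mem_side_self _ _)
        · exact Or.inr (mem_side_self _ _)
      · rcases ih hcu with h1 | h1
        · refine Or.inl (h1.trans (Adj.reachable ?_).symm)
          refine deleteEdges_adj.mpr ⟨hadj, ?_⟩
          rwa [Set.mem_singleton_iff]
        · refine Or.inr (h1.trans (Adj.reachable ?_).symm)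
          refine deleteEdges_adj.mpr ⟨hadj, ?_⟩
          rw [Set.mem_singleton_iff, show s(v,u) = s(u,v) from Sym2.eq_swap]
          exact he
  obtain ⟨p⟩ := hT.isConnected.preconnected x u
  exact key p rfl

lemma disj (hT : T.IsTree) {u v : V} (h : T.Adj u v) {x : V}
    (h1 : x ∈ side T u v) (h2 : x ∈ side T v u) : False := by
  rw [side, Set.mem_setOf_eq, del_comm] at h2
  exact not_reachable_del hT h (h1.trans h2.symm)

lemma side_swap_eq_compl (hT : T.IsTree) {u v : V} (h : T.Adj u v) :
    side T v u = (side T u v)ᶜ := by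
  ext x
  constructor
  · intro hx hx'
    exact disj hT h hx' hx
  · intro hx
    rcases cover hT h x with h1 | h1
    · exact absurd h1 hx
    · exact h1

lemma aa_add_aa (hT : T.IsTree) {u v : V} (h : T.Adj u v) :
    aa T u v + aa T v u = Nat.card V := by
  rw [aa, aa, side_swap_eq_compl hT h]
  exact Set.ncard_add_ncard_compl _

lemma WK {a b x w z : V} (hx : x ∈ side T a b) (hw : w ∉ side T a b) :
    (T.deleteEdges {s(w, z)}).Reachable a x := by
  classical
  obtain ⟨p⟩ := hx
  refine ⟨p.transfer _ ?_⟩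
  intro e he
  rw [edgeSet_deleteEdges]
  refine ⟨edgeSet_mono (deleteEdges_le _) (p.edges_subset_edgeSet he), ?_⟩
  rintro rfl
  exact hw ⟨p.takeUntil w (p.fst_mem_support_of_mem_edges he)⟩

lemma side_subset (hT : T.IsTree) {u v w : V} (huv : T.Adj u v) (huw : T.Adj u w)
    (hvw : v ≠ w) : side T v u ⊆ side T u w := by
  intro x hx
  have hu : u ∉ side T v u := self_not_mem_side_swap hT huv
  have hr := WK (z := w) hx hu
  refine Reachable.trans ?_ hr
  refine Adj.reachable (deleteEdges_adj.mpr ⟨huv, ?_⟩)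
  rw [Set.mem_singleton_iff]
  intro hh
  rcases Sym2.eq_iff.mp hh with ⟨-, h2⟩ | ⟨h2, h3⟩
  · exact hvw h2
  · exact huv.ne' h3

lemma key_ineq (hT : T.IsTree) {u v w z : V} (huv : T.Adj u v) (hwz : T.Adj w z)
    (hne : s(u, v) ≠ s(w, z)) (hw : w ∈ side T u v) (hu : u ∈ side T w z) :
    aa T v u + 1 ≤ aa T w z := by
  have hv : v ∈ side T w z :=
    hu.trans (Adj.reachable (deleteEdges_adj.mpr ⟨huv, by simpa using hne⟩))
  have hsub : side T v u ⊆ side T w z := by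
    intro x hx
    have hwn : w ∉ side T v u := fun hw' => disj hT huv hw hw'
    exact hv.trans (WK (z := z) hx hwn)
  have hun : u ∉ side T v u := self_not_mem_side_swap hT huv
  have hins : insert u (side T v u) ⊆ side T w z := Set.insert_subset hu hsub
  have h1 : (insert u (side T v u)).ncard = aa T v u + 1 :=
    Set.ncard_insert_of_notMem hun (Set.toFinite _)
  have h2 : (insert u (side T v u)).ncard ≤ aa T w z :=
    Set.ncard_le_ncard hins (Set.toFinite _)
  omega

lemma balanced_unique_aux (hT : T.IsTree) {u v w z : V} (huv : T.Adj u v) (hwz : T.Adj w z)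
    (hbu : aa T u v = aa T v u) (hbw : aa T w z = aa T z w)
    (hne : s(u, v) ≠ s(w, z)) (hw : w ∈ side T u v) : False := by
  have hz : z ∈ side T u v :=
    hw.trans (Adj.reachable (deleteEdges_adj.mpr ⟨hwz, by simpa using hne.symm⟩))
  rcases cover hT hwz u with hu | hu
  · have h1 := key_ineq hT huv hwz hne hw hu
    have h2 := key_ineq hT hwz huv hne.symm hu hw
    omega
  · have hne' : s(u, v) ≠ s(z, w) := by
      rw [show s(z, w) = s(w, z) from Sym2.eq_swap]; exact hne
    have h1 := key_ineq hT huv hwz.symm hne' hz hu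
    have h2 := key_ineq hT hwz.symm huv hne'.symm hu hz
    omega

lemma balanced_unique (hT : T.IsTree) {u v w z : V} (huv : T.Adj u v) (hwz : T.Adj w z)
    (hbu : aa T u v = aa T v u) (hbw : aa T w z = aa T z w) : s(u, v) = s(w, z) := by
  by_contra hne
  rcases cover hT huv w with hw | hw
  · exact balanced_unique_aux hT huv hwz hbu hbw hne hw
  · refine balanced_unique_aux hT huv.symm hwz hbu.symm hbw ?_ hw
    rw [show s(v, u) = s(u, v) from Sym2.eq_swap]; exact hne

lemma exists_branch (hT : T.IsTree) {c x : V} (hne : c ≠ x) :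
    ∃ d, T.Adj c d ∧ x ∈ side T d c := by
  classical
  obtain ⟨p⟩ := hT.isConnected.preconnected c x
  obtain ⟨q, hq⟩ := p.toPath
  cases q with
  | nil => exact absurd rfl hne
  | @cons _ d _ hadj r =>
    rw [Walk.cons_isPath_iff] at hq
    refine ⟨d, hadj, ⟨r.transfer _ ?_⟩⟩
    intro e he
    rw [edgeSet_deleteEdges]
    refine ⟨r.edges_subset_edgeSet he, ?_⟩
    rintro rfl
    exact hq.2 (r.snd_mem_support_of_mem_edges he)

/-- `c` is a centroid: every branch at `c` has at most half the vertices. -/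
def Centroid (T : SimpleGraph V) (c : V) : Prop :=
  ∀ v, T.Adj c v → aa T v c ≤ aa T c v

lemma centroid_adj (hT : T.IsTree) {c1 c2 : V} (h1 : Centroid T c1) (h2 : Centroid T c2)
    (hne : c1 ≠ c2) : T.Adj c1 c2 ∧ aa T c1 c2 = aa T c2 c1 := by
  obtain ⟨d, hd, hc2⟩ := exists_branch hT hne
  obtain ⟨d', hd', hc1⟩ := exists_branch hT hne.symm
  have s1 : side T c1 d ⊆ side T d' c2 := by
    intro x hx
    have hwn : c2 ∉ side T c1 d := fun h => disj hT hd h hc2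
    have hr := WK (z := d') hx hwn
    refine hc1.trans ?_
    rwa [del_comm d' c2]
  have s2 : side T c2 d' ⊆ side T d c1 := by
    intro x hx
    have hwn : c1 ∉ side T c2 d' := fun h => disj hT hd' h hc1
    have hr := WK (z := d) hx hwn
    refine hc2.trans ?_
    rwa [del_comm d c1]
  have i1 : aa T c1 d ≤ aa T d' c2 := Set.ncard_le_ncard s1 (Set.toFinite _)
  have i2 : aa T c2 d' ≤ aa T d c1 := Set.ncard_le_ncard s2 (Set.toFinite _)
  have i3 := h1 d hd
  have i4 := h2 d' hd'
  have b1 : aa T c1 d = aa T d c1 := by omega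
  have b2 : aa T c2 d' = aa T d' c2 := by omega
  have heq := balanced_unique hT hd hd' b1 b2
  rcases Sym2.eq_iff.mp heq with ⟨h5, h6⟩ | ⟨h5, h6⟩
  · exact absurd h5 hne
  · subst h6
    exact ⟨hd, b1⟩

lemma balanced_centroid (hT : T.IsTree) {u v : V} (huv : T.Adj u v)
    (hb : aa T u v = aa T v u) : Centroid T u := by
  intro w huw
  by_cases hwv : w = v
  · subst hwv; omega
  · have h1 : aa T w u ≤ aa T u v :=
      Set.ncard_le_ncard (side_subset hT huw huv hwv) (Set.toFinite _)
    have h2 := aa_add_aa hT huv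
    have h3 := aa_add_aa hT huw
    omega

lemma small_unique (hT : T.IsTree) {u v w : V} (huv : T.Adj u v) (huw : T.Adj u w)
    (h1 : aa T u v < aa T v u) (h2 : aa T u w < aa T w u) : v = w := by
  by_contra hne
  have a1 : aa T v u ≤ aa T u w :=
    Set.ncard_le_ncard (side_subset hT huv huw hne) (Set.toFinite _)
  have a2 : aa T w u ≤ aa T u v :=
    Set.ncard_le_ncard (side_subset hT huw huv (Ne.symm hne)) (Set.toFinite _)
  omega

open Classical in
noncomputable def bb (T : SimpleGraph V) (u : V) : ℕ :=
  (Finset.univ.filter fun v => T.Adj u v).sup fun v => aa T v u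

open Classical in
lemma le_bb {u v : V} (h : T.Adj u v) : aa T v u ≤ bb T u := by
  rw [bb]
  exact Finset.le_sup (f := fun v => aa T v u)
    (Finset.mem_filter.mpr ⟨Finset.mem_univ _, h⟩)

open Classical in
lemma bb_lt {u : V} {m : ℕ} (hpos : 0 < m) (h : ∀ v, T.Adj u v → aa T v u < m) :
    bb T u < m := by
  rw [bb]
  rw [Finset.sup_lt_iff (by exact hpos)]
  intro b hb
  rw [Finset.mem_filter] at hb
  exact h b hb.2

lemma exists_centroid [Nonempty V] (hT : T.IsTree) : ∃ c, Centroid T c := by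
  classical
  by_contra hc
  push_neg at hc
  simp only [Centroid, not_forall, not_le] at hc
  obtain ⟨u, -, hmin⟩ :=
    Finset.exists_min_image Finset.univ (bb T) ⟨Classical.arbitrary V, Finset.mem_univ _⟩
  obtain ⟨v, huv, hlt⟩ := hc u
  have hvu_le : aa T v u ≤ bb T u := le_bb huv
  have hpos : 0 < bb T u := by omega
  have hblt : bb T v < bb T u := by
    apply bb_lt hpos
    intro w hvw
    by_cases hwu : w = u
    · subst hwu; omega
    · have hsub : side T w v ⊆ side T v u := side_subset hT hvw huv.symm hwu
      have hss : side T w v ⊂ side T v u := by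
        refine ⟨hsub, fun hsup => ?_⟩
        exact self_not_mem_side_swap hT hvw (hsup (mem_side_self v u))
      have h4 : aa T w v < aa T v u := Set.ncard_lt_ncard hss (Set.toFinite _)
      omega
  exact absurd (hmin v (Finset.mem_univ v)) (not_le.mpr hblt)

def delHom (φ : T ≃g T) (u v : V) :
    T.deleteEdges {s(u, v)} →g T.deleteEdges {s(φ u, φ v)} := by
  refine RelHom.mk φ ?_
  intro a b h
  rw [deleteEdges_adj] at h ⊢
  refine ⟨φ.map_adj_iff.mpr h.1, ?_⟩
  rw [Set.mem_singleton_iff]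
  intro hh
  rcases Sym2.eq_iff.mp hh with ⟨ha, hb⟩ | ⟨ha, hb⟩
  · exact h.2 (by rw [Set.mem_singleton_iff, φ.injective ha, φ.injective hb])
  · refine h.2 ?_
    rw [Set.mem_singleton_iff, φ.injective ha, φ.injective hb]
    exact Sym2.eq_swap

lemma mem_side_map (φ : T ≃g T) {u v x : V} (hx : x ∈ side T u v) :
    φ x ∈ side T (φ u) (φ v) :=
  Reachable.map (delHom φ u v) hx

lemma side_map_eq (φ : T ≃g T) (u v : V) : side T (φ u) (φ v) = φ '' side T u v := by
  ext y
  constructor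
  · intro hy
    have h2 := mem_side_map φ.symm hy
    rw [φ.symm_apply_apply, φ.symm_apply_apply] at h2
    exact ⟨_, h2, φ.apply_symm_apply y⟩
  · rintro ⟨x, hx, rfl⟩
    exact mem_side_map φ hx

lemma aa_map (φ : T ≃g T) (u v : V) : aa T (φ u) (φ v) = aa T u v := by
  rw [aa, aa, side_map_eq, Set.ncard_image_of_injective _ φ.injective]

lemma centroid_map (φ : T ≃g T) {c : V} (h : Centroid T c) : Centroid T (φ c) := by
  intro w hw
  have hw' : T.Adj c (φ.symm w) := by
    have h3 := φ.symm.map_adj_iff.mpr hw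
    rwa [φ.symm_apply_apply] at h3
  have h4 := h _ hw'
  calc aa T w (φ c) = aa T (φ (φ.symm w)) (φ c) := by rw [φ.apply_symm_apply]
    _ = aa T (φ.symm w) c := aa_map φ _ _
    _ ≤ aa T c (φ.symm w) := h4
    _ = aa T (φ c) (φ (φ.symm w)) := (aa_map φ _ _).symm
    _ = aa T (φ c) w := by rw [φ.apply_symm_apply]

lemma isSymmetryEdge_swap {u v : V} (h : IsSymmetryEdge T s(u, v)) :
    ∃ φ : T ≃g T, φ u = v ∧ φ v = u := by
  obtain ⟨φ, a, b, he, ha, hb⟩ := h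
  rcases Sym2.eq_iff.mp he with ⟨rfl, rfl⟩ | ⟨rfl, rfl⟩
  · exact ⟨φ, ha, hb⟩
  · exact ⟨φ, hb, ha⟩

lemma sym_balanced {u v : V} (h : IsSymmetryEdge T s(u, v)) : aa T u v = aa T v u := by
  obtain ⟨φ, h1, h2⟩ := isSymmetryEdge_swap h
  calc aa T u v = aa T (φ u) (φ v) := (aa_map φ u v).symm
    _ = aa T v u := by rw [h1, h2]

lemma fixed_of_bal (hT : T.IsTree) {u v : V} (huv : T.Adj u v) (hb : aa T u v = aa T v u)
    (hns : ¬ IsSymmetryEdge T s(u, v)) (φ : T ≃g T) : φ u = u := by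
  have hadj' : T.Adj (φ u) (φ v) := φ.map_adj_iff.mpr huv
  have hb' : aa T (φ u) (φ v) = aa T (φ v) (φ u) := by rw [aa_map, aa_map, hb]
  have heq := balanced_unique hT hadj' huv hb' hb
  rcases Sym2.eq_iff.mp heq with ⟨h5, h6⟩ | ⟨h5, h6⟩
  · exact h5
  · exact absurd ⟨φ, u, v, rfl, h5, h6⟩ hns

open Classical in
/-- The orbit-wise map from vertices to (non-symmetry) edges. -/
noncomputable def F (T : SimpleGraph V) (u : V) :
    Option {e : T.edgeSet // ¬ IsSymmetryEdge T e.val} :=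
  if h1 : ∃ v, T.Adj u v ∧ aa T u v < aa T v u then
    some ⟨⟨s(u, h1.choose), (mem_edgeSet T).mpr h1.choose_spec.1⟩,
      fun hs => absurd (sym_balanced hs) (Nat.ne_of_lt h1.choose_spec.2)⟩
  else if h2 : ∃ v, T.Adj u v ∧ aa T u v = aa T v u ∧
      ¬ IsSymmetryEdge T s(u, v) ∧ WellOrderingRel u v then
    some ⟨⟨s(u, h2.choose), (mem_edgeSet T).mpr h2.choose_spec.1⟩, h2.choose_spec.2.2.1⟩
  else none

lemma F_eq_small (hT : T.IsTree) {u v : V} (huv : T.Adj u v) (hlt : aa T u v < aa T v u) :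
    F T u = some ⟨⟨s(u, v), (mem_edgeSet T).mpr huv⟩,
      fun hs => absurd (sym_balanced hs) (Nat.ne_of_lt hlt)⟩ := by
  have h1 : ∃ w, T.Adj u w ∧ aa T u w < aa T w u := ⟨v, huv, hlt⟩
  rw [F, dif_pos h1]
  refine congrArg some (Subtype.ext (Subtype.ext ?_))
  show s(u, h1.choose) = s(u, v)
  rw [small_unique hT h1.choose_spec.1 huv h1.choose_spec.2 hlt]

lemma F_eq_balanced (hT : T.IsTree) {u v : V} (huv : T.Adj u v) (hb : aa T u v = aa T v u)
    (hns : ¬ IsSymmetryEdge T s(u, v)) (hwor : WellOrderingRel u v) :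
    F T u = some ⟨⟨s(u, v), (mem_edgeSet T).mpr huv⟩, hns⟩ := by
  have hcen : Centroid T u := balanced_centroid hT huv hb
  have h1 : ¬ ∃ w, T.Adj u w ∧ aa T u w < aa T w u := by
    rintro ⟨w, hw, hlt⟩
    exact absurd (hcen w hw) (not_le.mpr hlt)
  have h2 : ∃ w, T.Adj u w ∧ aa T u w = aa T w u ∧
      ¬ IsSymmetryEdge T s(u, w) ∧ WellOrderingRel u w := ⟨v, huv, hb, hns, hwor⟩
  rw [F, dif_neg h1, dif_pos h2]
  refine congrArg some (Subtype.ext (Subtype.ext ?_))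
  show s(u, h2.choose) = s(u, v)
  obtain ⟨hadj', hb', -, -⟩ := h2.choose_spec
  have heq := balanced_unique hT hadj' huv hb' hb
  rcases Sym2.eq_iff.mp heq with ⟨-, h6⟩ | ⟨h5, -⟩
  · rw [h6]
  · exact absurd h5 huv.ne

lemma F_eq_none (hT : T.IsTree) {u : V} (hcen : Centroid T u)
    (hn2 : ¬ ∃ v, T.Adj u v ∧ aa T u v = aa T v u ∧
      ¬ IsSymmetryEdge T s(u, v) ∧ WellOrderingRel u v) : F T u = none := by
  have h1 : ¬ ∃ w, T.Adj u w ∧ aa T u w < aa T w u := by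
    rintro ⟨w, hw, hlt⟩
    exact absurd (hcen w hw) (not_le.mpr hlt)
  rw [F, dif_neg h1, dif_neg hn2]

lemma F_spec_some (hT : T.IsTree) {u : V} {x : {e : T.edgeSet // ¬ IsSymmetryEdge T e.val}}
    (h : F T u = some x) :
    ∃ v, T.Adj u v ∧ x.val.val = s(u, v) ∧
      (aa T u v < aa T v u ∨
        (aa T u v = aa T v u ∧ ¬ IsSymmetryEdge T s(u, v) ∧ WellOrderingRel u v)) := by
  rw [F] at h
  split_ifs at h with h1 h2
  · obtain ⟨huv, hlt⟩ := h1.choose_spec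
    exact ⟨h1.choose, huv, by rw [← Option.some_inj.mp h], Or.inl hlt⟩
  · obtain ⟨huv, hb, hns, hwor⟩ := h2.choose_spec
    exact ⟨h2.choose, huv, by rw [← Option.some_inj.mp h], Or.inr ⟨hb, hns, hwor⟩⟩

lemma F_spec_none (hT : T.IsTree) {u : V} (h : F T u = none) :
    Centroid T u ∧ ¬ ∃ v, T.Adj u v ∧ aa T u v = aa T v u ∧
      ¬ IsSymmetryEdge T s(u, v) ∧ WellOrderingRel u v := by
  rw [F] at h
  split_ifs at h with h1 h2
  exact ⟨fun w hw => not_lt.mp fun hlt => h1 ⟨w, hw, hlt⟩, h2⟩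

/-- The relation of similarity of non-symmetry edges. -/
abbrev REr (T : SimpleGraph V) :
    {e : T.edgeSet // ¬ IsSymmetryEdge T e.val} →
      {e : T.edgeSet // ¬ IsSymmetryEdge T e.val} → Prop :=
  fun e f => ∃ φ : T ≃g T, Sym2.map φ e.val.val = f.val.val

/-- The relation of similarity of vertices. -/
abbrev RVr (T : SimpleGraph V) : V → V → Prop := fun u v => ∃ φ : T ≃g T, φ u = v

lemma REr_equiv : Equivalence (REr T) := by
  constructor
  · intro x
    refine ⟨RelIso.refl T.Adj, ?_⟩
    have h : ⇑(RelIso.refl T.Adj) = id := rfl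
    rw [h, Sym2.map_id, id]
  · rintro x y ⟨φ, h⟩
    refine ⟨φ.symm, ?_⟩
    rw [← h, Sym2.map_map]
    have h2 : (⇑φ.symm ∘ ⇑φ) = id := funext φ.symm_apply_apply
    rw [h2, Sym2.map_id, id]
  · rintro x y z ⟨φ, h⟩ ⟨ψ, h2⟩
    refine ⟨φ.trans ψ, ?_⟩
    have h3 : ⇑(φ.trans ψ) = ⇑ψ ∘ ⇑φ := rfl
    rw [h3, ← Sym2.map_map, h, h2]

lemma F_wd (hT : T.IsTree) {u u' : V} (φ : T ≃g T) (huu' : φ u = u') :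
    Option.map (Quot.mk (REr T)) (F T u) = Option.map (Quot.mk (REr T)) (F T u') := by
  by_cases h1 : ∃ v, T.Adj u v ∧ aa T u v < aa T v u
  · obtain ⟨v, huv, hlt⟩ := h1
    have huv' : T.Adj u' (φ v) := by rw [← huu']; exact φ.map_adj_iff.mpr huv
    have hlt' : aa T u' (φ v) < aa T (φ v) u' := by
      rw [← huu', aa_map, aa_map]; exact hlt
    rw [F_eq_small hT huv hlt, F_eq_small hT huv' hlt']
    refine congrArg some (Quot.sound ⟨φ, ?_⟩)
    show Sym2.map φ s(u, v) = s(u', φ v)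
    rw [Sym2.map_pair_eq, huu']
  · by_cases h2 : ∃ v, T.Adj u v ∧ aa T u v = aa T v u ∧
        ¬ IsSymmetryEdge T s(u, v) ∧ WellOrderingRel u v
    · obtain ⟨v, huv, hb, hns, -⟩ := h2
      have hfix : φ u = u := fixed_of_bal hT huv hb hns φ
      rw [← huu', hfix]
    · have hcen : Centroid T u := fun w hw => not_lt.mp fun hlt => h1 ⟨w, hw, hlt⟩
      have hcen' : Centroid T u' := huu' ▸ centroid_map φ hcen
      have h2' : ¬ ∃ v, T.Adj u' v ∧ aa T u' v = aa T v u' ∧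
          ¬ IsSymmetryEdge T s(u', v) ∧ WellOrderingRel u' v := by
        rintro ⟨v, hv, hb, hns, hwor⟩
        have hfix : φ.symm u' = u' := fixed_of_bal hT hv hb hns φ.symm
        have h4 : u = φ.symm u' := by rw [← huu', φ.symm_apply_apply]
        have h5 : u = u' := by rw [h4, hfix]
        subst h5
        exact h2 ⟨v, hv, hb, hns, hwor⟩
      rw [F_eq_none hT hcen h2, F_eq_none hT hcen' h2']

theorem main [Nonempty V] (hT : T.IsTree) :
    Nat.card (Quot (RVr T)) = Nat.card (Quot (REr T)) + 1 := by
  classical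
  let f : Quot (RVr T) → Option (Quot (REr T)) :=
    Quot.lift (fun u => Option.map (Quot.mk (REr T)) (F T u))
      (fun u u' h => by obtain ⟨φ, hφ⟩ := h; exact F_wd hT φ hφ)
  have hinj : Function.Injective f := by
    intro qa qb
    induction qa using Quot.ind with | _ u =>
    induction qb using Quot.ind with | _ u' =>
    intro h
    have h' : Option.map (Quot.mk (REr T)) (F T u) =
        Option.map (Quot.mk (REr T)) (F T u') := h
    cases hu : F T u with
    | none =>
      cases hu' : F T u' with
      | none =>
        obtain ⟨hc, hn2⟩ := F_spec_none hT hu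
        obtain ⟨hc', hn2'⟩ := F_spec_none hT hu'
        by_cases he : u = u'
        · exact congrArg _ he
        · obtain ⟨hadj, hb⟩ := centroid_adj hT hc hc' he
          by_cases hsym : IsSymmetryEdge T s(u, u')
          · obtain ⟨φ, h1, -⟩ := isSymmetryEdge_swap hsym
            exact Quot.sound ⟨φ, h1⟩
          · rcases trichotomous_of WellOrderingRel u u' with hw | hw | hw
            · exact absurd ⟨u', hadj, hb, hsym, hw⟩ hn2
            · exact absurd hw he
            · refine absurd ⟨u, hadj.symm, hb.symm, ?_, hw⟩ hn2'
              rw [show s(u', u) = s(u, u') from Sym2.eq_swap]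
              exact hsym
      | some y => rw [hu, hu'] at h'; simp at h'
    | some x =>
      cases hu' : F T u' with
      | none => rw [hu, hu'] at h'; simp at h'
      | some y =>
        rw [hu, hu'] at h'
        simp only [Option.map_some] at h'
        have hre : REr T x y :=
          (REr_equiv (T := T)).eqvGen_iff.mp (Quot.eq.mp (Option.some_inj.mp h'))
        obtain ⟨ψ, hψ⟩ := hre
        obtain ⟨v, huv, hx, hcase⟩ := F_spec_some hT hu
        obtain ⟨w, hu'w, hy, hcase'⟩ := F_spec_some hT hu'
        rw [hx, hy, Sym2.map_pair_eq] at hψ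
        have e1 : aa T (ψ u) (ψ v) = aa T u v := aa_map ψ u v
        have e2 : aa T (ψ v) (ψ u) = aa T v u := aa_map ψ v u
        rcases hcase with hlt | ⟨hb, hns, hwor⟩
        · rcases hcase' with hlt' | ⟨hb', hns', hwor'⟩
          · rcases Sym2.eq_iff.mp hψ with ⟨h5, h6⟩ | ⟨h5, h6⟩
            · exact Quot.sound ⟨ψ, h5⟩
            · rw [h5, h6] at e1 e2
              omega
          · rcases Sym2.eq_iff.mp hψ with ⟨h5, h6⟩ | ⟨h5, h6⟩ <;>
              rw [h5, h6] at e1 e2 <;> omega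
        · rcases hcase' with hlt' | ⟨hb', hns', hwor'⟩
          · rcases Sym2.eq_iff.mp hψ with ⟨h5, h6⟩ | ⟨h5, h6⟩ <;>
              rw [h5, h6] at e1 e2 <;> omega
          · have heq := balanced_unique hT huv hu'w hb hb'
            rcases Sym2.eq_iff.mp heq with ⟨h5, h6⟩ | ⟨h5, h6⟩
            · exact congrArg _ h5
            · rw [← h5, ← h6] at hwor'
              exact absurd hwor' (asymm hwor)
  have hsurj : Function.Surjective f := by
    intro o
    cases o with
    | none =>
      obtain ⟨c, hc⟩ := exists_centroid hT
      by_cases h2 : ∃ v, T.Adj c v ∧ aa T c v = aa T v c ∧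
          ¬ IsSymmetryEdge T s(c, v) ∧ WellOrderingRel c v
      · obtain ⟨v, hcv, hb, hns, hwor⟩ := h2
        refine ⟨Quot.mk _ v, ?_⟩
        show Option.map (Quot.mk (REr T)) (F T v) = none
        rw [F_eq_none hT (balanced_centroid hT hcv.symm hb.symm) ?_]
        · rfl
        rintro ⟨w, hvw, hbw, hnsw, hworw⟩
        have heq := balanced_unique hT hvw hcv hbw hb
        rcases Sym2.eq_iff.mp heq with ⟨h5, h6⟩ | ⟨h5, h6⟩
        · exact absurd h5.symm hcv.ne
        · rw [h6] at hworw
          exact asymm hwor hworw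
      · refine ⟨Quot.mk _ c, ?_⟩
        show Option.map (Quot.mk (REr T)) (F T c) = none
        rw [F_eq_none hT hc h2]
        rfl
    | some q =>
      induction q using Quot.ind with | _ x =>
      obtain ⟨⟨e, he⟩, hns⟩ := x
      revert he hns
      induction e using Sym2.ind with | _ u v =>
      intro he hns
      have hadj : T.Adj u v := (mem_edgeSet T).mp he
      rcases lt_trichotomy (aa T u v) (aa T v u) with hlt | hb | hgt
      · refine ⟨Quot.mk _ u, ?_⟩
        show Option.map (Quot.mk (REr T)) (F T u) =
          some (Quot.mk (REr T) ⟨⟨s(u, v), he⟩, hns⟩)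
        rw [F_eq_small hT hadj hlt]
        rfl
      · rcases trichotomous_of WellOrderingRel u v with hw | hw | hw
        · refine ⟨Quot.mk _ u, ?_⟩
          show Option.map (Quot.mk (REr T)) (F T u) =
            some (Quot.mk (REr T) ⟨⟨s(u, v), he⟩, hns⟩)
          rw [F_eq_balanced hT hadj hb hns hw]
          rfl
        · exact absurd hw hadj.ne
        · refine ⟨Quot.mk _ v, ?_⟩
          show Option.map (Quot.mk (REr T)) (F T v) =
            some (Quot.mk (REr T) ⟨⟨s(u, v), he⟩, hns⟩)
          have hns' : ¬ IsSymmetryEdge T s(v, u) := by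
            rw [show s(v, u) = s(u, v) from Sym2.eq_swap]; exact hns
          rw [F_eq_balanced hT hadj.symm hb.symm hns' hw]
          exact congrArg some
            (congrArg (Quot.mk (REr T)) (Subtype.ext (Subtype.ext Sym2.eq_swap)))
      · refine ⟨Quot.mk _ v, ?_⟩
        show Option.map (Quot.mk (REr T)) (F T v) =
          some (Quot.mk (REr T) ⟨⟨s(u, v), he⟩, hns⟩)
        rw [F_eq_small hT hadj.symm hgt]
        exact congrArg some
          (congrArg (Quot.mk (REr T)) (Subtype.ext (Subtype.ext Sym2.eq_swap)))
  have hcard : Nat.card (Quot (RVr T)) = Nat.card (Option (Quot (REr T))) :=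
    Nat.card_eq_of_bijective f ⟨hinj, hsurj⟩
  rw [hcard, Finite.card_option]

end OtterAux


/-- **Otter's dissimilarity characteristic theorem.** In any finite tree, the
number of orbits of vertices under the automorphism group is exactly one more
than the number of orbits of edges that are not symmetry edges. -/
theorem otter_dissimilarity {V : Type*} [Fintype V] [Nonempty V]
    (T : SimpleGraph V) (hT : T.IsTree) :
    Nat.card (Quot fun u v : V => ∃ φ : T ≃g T, φ u = v) =
      Nat.card (Quot fun e f : {e : T.edgeSet // ¬ IsSymmetryEdge T e.val} =>
        ∃ φ : T ≃g T, Sym2.map φ e.val.val = f.val.val) + 1 :=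
  OtterAux.main hT
end
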